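/- arXiv:1203.1024 — 6 statements merged into one kernel-verified Lean document; each statement's English description precedes it below -/
import Mathlib

section
/- Let Ω = {0,1}^S be a finite product probability space with product measure, and let A be an increasing event independent of each of the increasing events B_1, ..., B_m. Then A is independent of B_1 ∩ ... ∩ B_m, and also independent of B_1^c ∩ ... ∩ B_m^c. -/
open MeasureTheory

section HarrisAux

open scoped Classical

variable {S : Type*} [Fintype S] (μs : S → Measure Bool) [∀ s, IsProbabilityMeasure (μs s)]

/-- The weight of a point for the product measure. -/
noncomputable def harrisWeight (ω : S → Bool) : ℝ := ∏ s, (μs s {ω s}).toReal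

/-- Real-valued measure of a set. -/
noncomputable def harrisNu (X : Set (S → Bool)) : ℝ := (Measure.pi μs X).toReal

omit [∀ s, IsProbabilityMeasure (μs s)] in
lemma harrisWeight_nonneg (ω : S → Bool) : 0 ≤ harrisWeight μs ω :=
  Finset.prod_nonneg fun _ _ => ENNReal.toReal_nonneg

lemma pi_singleton (ω : S → Bool) :
    Measure.pi μs {ω} = ∏ s, μs s {ω s} := by
  rw [show ({ω} : Set (S → Bool)) = Set.pi Set.univ (fun s => {ω s}) by
    ext x; simp [Set.eq_singleton_iff_unique_mem, funext_iff, Set.mem_pi, eq_comm]]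
  exact Measure.pi_pi μs _

lemma harrisNu_eq_sum (X : Set (S → Bool)) :
    harrisNu μs X = ∑ ω : S → Bool, harrisWeight μs ω * (if ω ∈ X then (1:ℝ) else 0) := by
  have hX : Measure.pi μs X = ∑ ω ∈ Finset.univ.filter (· ∈ X), Measure.pi μs {ω} := by
    conv_lhs => rw [show X = ⋃ ω ∈ Finset.univ.filter (· ∈ X), {ω} by ext x; simp]
    exact measure_biUnion_finset (fun a _ b _ hab => by simp [Set.disjoint_singleton, hab])
      (fun _ _ => measurableSet_singleton _)
  rw [harrisNu, hX, ENNReal.toReal_sum (fun ω _ => measure_ne_top _ _), Finset.sum_filter]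
  refine Finset.sum_congr rfl fun ω _ => ?_
  by_cases h : ω ∈ X
  · rw [if_pos h, if_pos h, mul_one, pi_singleton, ENNReal.toReal_prod, harrisWeight]
  · rw [if_neg h, if_neg h, mul_zero]

lemma harrisSum_weight : ∑ ω : S → Bool, harrisWeight μs ω = 1 := by
  have := harrisNu_eq_sum μs Set.univ
  simpa [harrisNu] using this.symm

/-- Harris's lemma. -/
lemma harris_ineq (X Y : Set (S → Bool))
    (hX : ∀ ω ω' : S → Bool, (∀ s, ω s ≤ ω' s) → ω ∈ X → ω' ∈ X)
    (hY : ∀ ω ω' : S → Bool, (∀ s, ω s ≤ ω' s) → ω ∈ Y → ω' ∈ Y) :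
    harrisNu μs X * harrisNu μs Y ≤ harrisNu μs (X ∩ Y) := by
  have hfmono : Monotone (fun ω => if ω ∈ X then (1:ℝ) else 0) := by
    intro a b hab
    by_cases ha : a ∈ X
    · have hb : b ∈ X := hX a b (fun s => hab s) ha
      simp [ha, hb]
    · by_cases hb : b ∈ X <;> simp [ha, hb]
  have hgmono : Monotone (fun ω => if ω ∈ Y then (1:ℝ) else 0) := by
    intro a b hab
    by_cases ha : a ∈ Y
    · have hb : b ∈ Y := hY a b (fun s => hab s) ha
      simp [ha, hb]
    · by_cases hb : b ∈ Y <;> simp [ha, hb]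
  have hμ : ∀ a b : S → Bool,
      harrisWeight μs a * harrisWeight μs b ≤
        harrisWeight μs (a ⊓ b) * harrisWeight μs (a ⊔ b) := by
    intro a b
    refine le_of_eq ?_
    simp only [harrisWeight, ← Finset.prod_mul_distrib]
    refine Finset.prod_congr rfl fun s _ => ?_
    rcases le_total (a s) (b s) with h | h
    · simp [Pi.inf_apply, Pi.sup_apply, inf_eq_left.2 h, sup_eq_right.2 h]
    · simp [Pi.inf_apply, Pi.sup_apply, inf_eq_right.2 h, sup_eq_left.2 h, mul_comm]
  have key := fkg (fun ω => if ω ∈ X then (1:ℝ) else 0) (fun ω => if ω ∈ Y then (1:ℝ) else 0)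
    (harrisWeight μs)
    (fun ω => harrisWeight_nonneg μs ω)
    (fun ω => by dsimp; split <;> norm_num)
    (fun ω => by dsimp; split <;> norm_num)
    hfmono hgmono hμ
  calc harrisNu μs X * harrisNu μs Y
      = (∑ ω, harrisWeight μs ω * (if ω ∈ X then (1:ℝ) else 0)) *
          ∑ ω, harrisWeight μs ω * (if ω ∈ Y then (1:ℝ) else 0) := by
        rw [harrisNu_eq_sum, harrisNu_eq_sum]
    _ ≤ (∑ ω, harrisWeight μs ω) *
          ∑ ω, harrisWeight μs ω *
            ((if ω ∈ X then (1:ℝ) else 0) * (if ω ∈ Y then (1:ℝ) else 0)) := key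
    _ = harrisNu μs (X ∩ Y) := by
        rw [harrisSum_weight, one_mul, harrisNu_eq_sum]
        refine Finset.sum_congr rfl fun ω _ => ?_
        by_cases hx : ω ∈ X <;> by_cases hy : ω ∈ Y <;>
          simp [hx, hy, Set.mem_inter_iff]

lemma harrisNu_add (P Q : Set (S → Bool)) :
    harrisNu μs (P ∩ Q) + harrisNu μs (P ∪ Q) = harrisNu μs P + harrisNu μs Q := by
  simp only [harrisNu_eq_sum, ← Finset.sum_add_distrib]
  refine Finset.sum_congr rfl fun ω _ => ?_
  by_cases hp : ω ∈ P <;> by_cases hq : ω ∈ Q <;>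
    simp [hp, hq, Set.mem_inter_iff, Set.mem_union]

/-- The key step: independence passes to intersections and unions. -/
lemma harris_step (A Y Z : Set (S → Bool))
    (hA : ∀ ω ω' : S → Bool, (∀ s, ω s ≤ ω' s) → ω ∈ A → ω' ∈ A)
    (hY : ∀ ω ω' : S → Bool, (∀ s, ω s ≤ ω' s) → ω ∈ Y → ω' ∈ Y)
    (hZ : ∀ ω ω' : S → Bool, (∀ s, ω s ≤ ω' s) → ω ∈ Z → ω' ∈ Z)
    (h1 : harrisNu μs (A ∩ Y) = harrisNu μs A * harrisNu μs Y)
    (h2 : harrisNu μs (A ∩ Z) = harrisNu μs A * harrisNu μs Z) :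
    harrisNu μs (A ∩ (Y ∩ Z)) = harrisNu μs A * harrisNu μs (Y ∩ Z) ∧
    harrisNu μs (A ∩ (Y ∪ Z)) = harrisNu μs A * harrisNu μs (Y ∪ Z) := by
  have hYZi : ∀ ω ω' : S → Bool, (∀ s, ω s ≤ ω' s) → ω ∈ Y ∩ Z → ω' ∈ Y ∩ Z :=
    fun ω ω' h hm => ⟨hY ω ω' h hm.1, hZ ω ω' h hm.2⟩
  have hYZu : ∀ ω ω' : S → Bool, (∀ s, ω s ≤ ω' s) → ω ∈ Y ∪ Z → ω' ∈ Y ∪ Z := by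
    intro ω ω' h hm
    rcases hm with hm | hm
    · exact Or.inl (hY ω ω' h hm)
    · exact Or.inr (hZ ω ω' h hm)
  have K1 := harris_ineq μs A (Y ∩ Z) hA hYZi
  have K2 := harris_ineq μs A (Y ∪ Z) hA hYZu
  have E1 : harrisNu μs (A ∩ (Y ∩ Z)) + harrisNu μs (A ∩ (Y ∪ Z)) =
      harrisNu μs (A ∩ Y) + harrisNu μs (A ∩ Z) := by
    have h := harrisNu_add μs (A ∩ Y) (A ∩ Z)
    rw [show (A ∩ Y) ∩ (A ∩ Z) = A ∩ (Y ∩ Z) by ext x; simp [Set.mem_inter_iff]; tauto,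
      show (A ∩ Y) ∪ (A ∩ Z) = A ∩ (Y ∪ Z) by
        ext x; simp [Set.mem_inter_iff, Set.mem_union]; tauto] at h
    exact h
  have E2 := harrisNu_add μs Y Z
  have E3 : harrisNu μs A * harrisNu μs (Y ∩ Z) + harrisNu μs A * harrisNu μs (Y ∪ Z) =
      harrisNu μs (A ∩ Y) + harrisNu μs (A ∩ Z) := by
    rw [← mul_add, E2, mul_add, h1, h2]
  exact ⟨by linarith, by linarith⟩

end HarrisAux

/-- In a finite product probability space `{0,1}^S`, if an increasing event `A` is independent
of each of the increasing events `B 1, …, B m`, then `A` is independent of `⋂ i, B i` and of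
`⋂ i, (B i)ᶜ`. -/
theorem indep_iInter_of_increasing
    {S : Type*} [Fintype S] (μs : S → Measure Bool) [∀ s, IsProbabilityMeasure (μs s)]
    (m : ℕ) (A : Set (S → Bool)) (B : Fin m → Set (S → Bool))
    (hAinc : ∀ ω ω' : S → Bool, (∀ s, ω s ≤ ω' s) → ω ∈ A → ω' ∈ A)
    (hBinc : ∀ i, ∀ ω ω' : S → Bool, (∀ s, ω s ≤ ω' s) → ω ∈ B i → ω' ∈ B i)
    (hindep : ∀ i, Measure.pi μs (A ∩ B i) = Measure.pi μs A * Measure.pi μs (B i)) :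
    Measure.pi μs (A ∩ ⋂ i, B i) = Measure.pi μs A * Measure.pi μs (⋂ i, B i) ∧
    Measure.pi μs (A ∩ ⋂ i, (B i)ᶜ) = Measure.pi μs A * Measure.pi μs (⋂ i, (B i)ᶜ) := by
  classical
  have hindepR : ∀ i, harrisNu μs (A ∩ B i) = harrisNu μs A * harrisNu μs (B i) := by
    intro i
    have h := congrArg ENNReal.toReal (hindep i)
    rwa [ENNReal.toReal_mul] at h
  have main : ∀ t : Finset (Fin m),
      (harrisNu μs (A ∩ ⋂ i ∈ t, B i) = harrisNu μs A * harrisNu μs (⋂ i ∈ t, B i) ∧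
       (∀ ω ω' : S → Bool, (∀ s, ω s ≤ ω' s) → ω ∈ (⋂ i ∈ t, B i) → ω' ∈ (⋂ i ∈ t, B i))) ∧
      (harrisNu μs (A ∩ ⋃ i ∈ t, B i) = harrisNu μs A * harrisNu μs (⋃ i ∈ t, B i) ∧
       (∀ ω ω' : S → Bool, (∀ s, ω s ≤ ω' s) → ω ∈ (⋃ i ∈ t, B i) → ω' ∈ (⋃ i ∈ t, B i))) := by
    intro t
    induction t using Finset.induction_on with
    | empty =>
      refine ⟨⟨?_, ?_⟩, ⟨?_, ?_⟩⟩
      · simp only [Finset.notMem_empty, Set.iInter_of_empty, Set.iInter_univ, Set.inter_univ]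
        have h1 : harrisNu μs Set.univ = 1 := by simp [harrisNu]
        rw [h1, mul_one]
      · simp
      · simp [harrisNu]
      · simp
    | @insert a t' hnot ih =>
      obtain ⟨⟨hI, hIinc⟩, ⟨hU, hUinc⟩⟩ := ih
      have hstepI := harris_step μs A (B a) (⋂ i ∈ t', B i) hAinc (hBinc a) hIinc
        (hindepR a) hI
      have hstepU := harris_step μs A (B a) (⋃ i ∈ t', B i) hAinc (hBinc a) hUinc
        (hindepR a) hU
      have eI : (⋂ i ∈ insert a t', B i) = B a ∩ ⋂ i ∈ t', B i :=
        Finset.set_biInter_insert a t' B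
      have eU : (⋃ i ∈ insert a t', B i) = B a ∪ ⋃ i ∈ t', B i :=
        Finset.set_biUnion_insert a t' B
      refine ⟨⟨?_, ?_⟩, ⟨?_, ?_⟩⟩
      · rw [eI]; exact hstepI.1
      · rw [eI]; intro ω ω' hle hm
        exact ⟨hBinc a ω ω' hle hm.1, hIinc ω ω' hle hm.2⟩
      · rw [eU]; exact hstepU.2
      · rw [eU]; intro ω ω' hle hm
        rcases hm with hm | hm
        · exact Or.inl (hBinc a ω ω' hle hm)
        · exact Or.inr (hUinc ω ω' hle hm)
  have huniv := main Finset.univ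
  have hIuniv : (⋂ i ∈ Finset.univ, B i) = ⋂ i, B i := by simp
  have hUuniv : (⋃ i ∈ Finset.univ, B i) = ⋃ i, B i := by simp
  have claim1 : harrisNu μs (A ∩ ⋂ i, B i) = harrisNu μs A * harrisNu μs (⋂ i, B i) := by
    rw [← hIuniv]; exact huniv.1.1
  have hcompl : (⋂ i, (B i)ᶜ) = (⋃ i, B i)ᶜ := by
    simp [Set.compl_iUnion]
  have hUindep : harrisNu μs (A ∩ ⋃ i, B i) = harrisNu μs A * harrisNu μs (⋃ i, B i) := by
    rw [← hUuniv]; exact huniv.2.1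
  have claim2 : harrisNu μs (A ∩ ⋂ i, (B i)ᶜ) =
      harrisNu μs A * harrisNu μs (⋂ i, (B i)ᶜ) := by
    rw [hcompl]
    have split1 : harrisNu μs (A ∩ ⋃ i, B i) + harrisNu μs (A ∩ (⋃ i, B i)ᶜ) =
        harrisNu μs A := by
      have h := harrisNu_add μs (A ∩ ⋃ i, B i) (A ∩ (⋃ i, B i)ᶜ)
      rw [show (A ∩ ⋃ i, B i) ∩ (A ∩ (⋃ i, B i)ᶜ) = ∅ by
            ext x; simp [Set.mem_inter_iff]; tauto,
          show (A ∩ ⋃ i, B i) ∪ (A ∩ (⋃ i, B i)ᶜ) = A by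
            ext x; simp [Set.mem_inter_iff, Set.mem_union]; tauto] at h
      have hempty : harrisNu μs (∅ : Set (S → Bool)) = 0 := by simp [harrisNu]
      linarith
    have split2 : harrisNu μs (⋃ i, B i) + harrisNu μs (⋃ i, B i)ᶜ = 1 := by
      have h := harrisNu_add μs (⋃ i, B i) (⋃ i, B i)ᶜ
      have hempty : harrisNu μs ((⋃ i, B i) ∩ (⋃ i, B i)ᶜ) = 0 := by
        rw [Set.inter_compl_self]; simp [harrisNu]
      have huniv' : harrisNu μs ((⋃ i, B i) ∪ (⋃ i, B i)ᶜ) = 1 := by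
        rw [Set.union_compl_self]; simp [harrisNu]
      linarith
    linear_combination split1 - harrisNu μs A * split2 - hUindep
  have conv : ∀ X Y : Set (S → Bool), harrisNu μs (X ∩ Y) = harrisNu μs X * harrisNu μs Y →
      Measure.pi μs (X ∩ Y) = Measure.pi μs X * Measure.pi μs Y := by
    intro X Y h
    have h' : (Measure.pi μs (X ∩ Y)).toReal = (Measure.pi μs X * Measure.pi μs Y).toReal := by
      rw [ENNReal.toReal_mul]; exact h
    exact (ENNReal.toReal_eq_toReal_iff' (measure_ne_top _ _)
      (ENNReal.mul_ne_top (measure_ne_top _ _) (measure_ne_top _ _))).mp h'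
  exact ⟨conv A _ claim1, conv A _ claim2⟩
end

section
/- Let A_1, ..., A_k be events in a family I closed under intersections and unions in which any two events are positively correlated. Let X = Σ_i 1_{A_i}, μ = E[X], and Δ = Σ_i Σ_{j~i} Pr(A_i ∩ A_j), where i ~ j means i ≠ j and A_i, A_j are dependent. Then Pr(X = 0) ≤ exp(−μ + Δ/2). -/
open MeasureTheory Finset Real
open scoped Classical

section JansonAux

variable {Ω : Type*} [MeasurableSpace Ω] (P : Measure Ω) [IsProbabilityMeasure P]

lemma aux_pcompl {U : Set Ω} (hU : MeasurableSet U) :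
    (P Uᶜ).toReal = 1 - (P U).toReal := by
  have h : (P U).toReal + (P Uᶜ).toReal = 1 := by
    rw [← ENNReal.toReal_add (measure_ne_top _ _) (measure_ne_top _ _),
      measure_add_measure_compl hU]
    simp
  linarith

lemma aux_split (s : Set Ω) {t : Set Ω} (ht : MeasurableSet t) :
    (P (s ∩ t)).toReal + (P (s ∩ tᶜ)).toReal = (P s).toReal := by
  have h := measure_inter_add_diff (μ := P) s ht
  rw [Set.diff_eq] at h
  rw [← ENNReal.toReal_add (measure_ne_top _ _) (measure_ne_top _ _), h]

lemma aux_ie (s : Set Ω) {t : Set Ω} (ht : MeasurableSet t) :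
    (P (s ∪ t)).toReal + (P (s ∩ t)).toReal = (P s).toReal + (P t).toReal := by
  have h := measure_union_add_inter (μ := P) s ht
  have h1 := ENNReal.toReal_add (measure_ne_top P (s ∪ t)) (measure_ne_top P (s ∩ t))
  have h2 := ENNReal.toReal_add (measure_ne_top P s) (measure_ne_top P t)
  rw [← h1, ← h2, h]

lemma aux_corr (I : Set (Set Ω))
    (hcorr : ∀ A ∈ I, ∀ B ∈ I, P (A ∩ B) ≥ P A * P B)
    {B C : Set Ω} (hB : B ∈ I) (hC : C ∈ I) :
    (P B).toReal * (P C).toReal ≤ (P (B ∩ C)).toReal := by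
  have h := hcorr B hB C hC
  have := ENNReal.toReal_mono (measure_ne_top P (B ∩ C)) h
  rwa [ENNReal.toReal_mul] at this

omit [MeasurableSpace Ω] in
lemma aux_biUnion_mem {ι : Type*} (I : Set (Set Ω))
    (hunion : ∀ A ∈ I, ∀ B ∈ I, A ∪ B ∈ I) (f : ι → Set Ω) :
    ∀ (s : Finset ι), s.Nonempty → (∀ j ∈ s, f j ∈ I) → (⋃ j ∈ s, f j) ∈ I := by
  intro s
  induction s using Finset.induction_on with
  | empty => intro h; exact absurd h (by simp)
  | @insert a s ha ih =>
    intro _ hf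
    rw [Finset.set_biUnion_insert]
    rcases s.eq_empty_or_nonempty with rfl | hs'
    · simpa using hf a (Finset.mem_insert_self a ∅)
    · exact hunion _ (hf a (Finset.mem_insert_self a s)) _
        (ih hs' fun j hj => hf j (Finset.mem_insert_of_mem hj))

variable {k : ℕ} {A : Fin k → Set Ω}

lemma aux_measU (hAmeas : ∀ i, MeasurableSet (A i)) (s : Finset (Fin k)) :
    MeasurableSet (⋃ j ∈ s, A j) :=
  s.measurableSet_biUnion (fun j _ => hAmeas j)

omit [MeasurableSpace Ω] in
lemma aux_compl_eq (s : Finset (Fin k)) :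
    (⋂ j ∈ s, (A j)ᶜ) = (⋃ j ∈ s, A j)ᶜ := by
  simp [Set.compl_iUnion]

/-- key2: negative correlation of a member of I with intersection of complements -/
lemma aux_key2 (I : Set (Set Ω))
    (hcorr : ∀ A ∈ I, ∀ B ∈ I, P (A ∩ B) ≥ P A * P B)
    (hunion : ∀ A ∈ I, ∀ B ∈ I, A ∪ B ∈ I)
    (hA : ∀ i, A i ∈ I) (hAmeas : ∀ i, MeasurableSet (A i))
    {B : Set Ω} (hB : B ∈ I) (s : Finset (Fin k)) :
    (P (B ∩ ⋂ j ∈ s, (A j)ᶜ)).toReal ≤ (P B).toReal * (P (⋂ j ∈ s, (A j)ᶜ)).toReal := by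
  rcases s.eq_empty_or_nonempty with rfl | hs
  · simp
  · rw [aux_compl_eq]
    set U : Set Ω := ⋃ j ∈ s, A j with hU
    have hUmeas : MeasurableSet U := aux_measU hAmeas s
    have hUI : U ∈ I := aux_biUnion_mem I hunion A s hs (fun j _ => hA j)
    have h1 := aux_split P B hUmeas
    have h2 := aux_corr P I hcorr hB hUI
    have h3 := aux_pcompl P hUmeas
    rw [h3]
    nlinarith [ENNReal.toReal_nonneg (a := P B)]

/-- key3 -/
lemma aux_key3 (I : Set (Set Ω))
    (hcorr : ∀ A ∈ I, ∀ B ∈ I, P (A ∩ B) ≥ P A * P B)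
    (hinter : ∀ A ∈ I, ∀ B ∈ I, A ∩ B ∈ I)
    (hunion : ∀ A ∈ I, ∀ B ∈ I, A ∪ B ∈ I)
    (hA : ∀ i, A i ∈ I) (hAmeas : ∀ i, MeasurableSet (A i))
    {B : Set Ω} (hB : B ∈ I) (hBm : MeasurableSet B) :
    ∀ (s : Finset (Fin k)),
      (∀ j ∈ s, (P (B ∩ A j)).toReal = (P B).toReal * (P (A j)).toReal) →
      (P (B ∩ ⋃ j ∈ s, A j)).toReal ≤ (P B).toReal * (P (⋃ j ∈ s, A j)).toReal := by
  intro s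
  induction s using Finset.induction_on with
  | empty => intro _; simp
  | @insert a s ha ih =>
    intro hind
    have hindS : ∀ j ∈ s, (P (B ∩ A j)).toReal = (P B).toReal * (P (A j)).toReal :=
      fun j hj => hind j (Finset.mem_insert_of_mem hj)
    set U : Set Ω := ⋃ j ∈ s, A j with hUdef
    have hUmeas : MeasurableSet U := aux_measU hAmeas s
    rw [Finset.set_biUnion_insert]
    have hset : B ∩ (A a ∪ U) = (B ∩ A a) ∪ (B ∩ U) := Set.inter_union_distrib_left B (A a) U
    have hset2 : (B ∩ A a) ∩ (B ∩ U) = B ∩ (A a ∩ U) := by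
      ext x; simp only [Set.mem_inter_iff]; tauto
    -- inclusion exclusion for B ∩ (A a ∪ U)
    have hie1 : (P (B ∩ (A a ∪ U))).toReal + (P (B ∩ (A a ∩ U))).toReal
        = (P (B ∩ A a)).toReal + (P (B ∩ U)).toReal := by
      rw [hset, ← hset2]
      exact aux_ie P _ (hBm.inter hUmeas)
    -- inclusion exclusion for A a ∪ U
    have hie2 : (P (A a ∪ U)).toReal + (P (A a ∩ U)).toReal
        = (P (A a)).toReal + (P U).toReal := aux_ie P _ hUmeas
    -- lower bound on P (B ∩ (A a ∩ U))
    have hlow : (P B).toReal * (P (A a ∩ U)).toReal ≤ (P (B ∩ (A a ∩ U))).toReal := by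
      rcases s.eq_empty_or_nonempty with rfl | hs'
      · simp [hUdef]
      · have hAaU : A a ∩ U ∈ I := by
          have : A a ∩ U = ⋃ j ∈ s, (A a ∩ A j) := by
            rw [hUdef]; exact Set.inter_iUnion₂ _ _
          rw [this]
          exact aux_biUnion_mem I hunion _ s hs'
            (fun j _ => hinter _ (hA a) _ (hA j))
        exact aux_corr P I hcorr hB hAaU
    have hIH := ih hindS
    have ha' := hind a (Finset.mem_insert_self a s)
    nlinarith [ENNReal.toReal_nonneg (a := P B)]

/-- complement version of key3 -/
lemma aux_indep_compl (I : Set (Set Ω))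
    (hcorr : ∀ A ∈ I, ∀ B ∈ I, P (A ∩ B) ≥ P A * P B)
    (hinter : ∀ A ∈ I, ∀ B ∈ I, A ∩ B ∈ I)
    (hunion : ∀ A ∈ I, ∀ B ∈ I, A ∪ B ∈ I)
    (hA : ∀ i, A i ∈ I) (hAmeas : ∀ i, MeasurableSet (A i))
    {B : Set Ω} (hB : B ∈ I) (hBm : MeasurableSet B)
    (s : Finset (Fin k))
    (hind : ∀ j ∈ s, (P (B ∩ A j)).toReal = (P B).toReal * (P (A j)).toReal) :
    (P B).toReal * (P (⋂ j ∈ s, (A j)ᶜ)).toReal ≤ (P (B ∩ ⋂ j ∈ s, (A j)ᶜ)).toReal := by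
  rw [aux_compl_eq]
  set U : Set Ω := ⋃ j ∈ s, A j with hUdef
  have hUmeas : MeasurableSet U := aux_measU hAmeas s
  have h1 := aux_split P B hUmeas
  have h2 := aux_key3 P I hcorr hinter hunion hA hAmeas hB hBm s hind
  have h3 := aux_pcompl P hUmeas
  rw [h3]
  nlinarith [ENNReal.toReal_nonneg (a := P B)]

/-- union bound -/
lemma aux_union_bound (X : Set Ω) (D : Finset (Fin k)) :
    (P X).toReal ≤ (P (X ∩ ⋂ j ∈ D, (A j)ᶜ)).toReal + ∑ j ∈ D, (P (X ∩ A j)).toReal := by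
  have hsub : X ⊆ (X ∩ ⋂ j ∈ D, (A j)ᶜ) ∪ ⋃ j ∈ D, (X ∩ A j) := by
    intro x hx
    by_cases h : ∀ j ∈ D, x ∉ A j
    · left
      exact ⟨hx, by simpa using h⟩
    · right
      push_neg at h
      obtain ⟨j, hj, hxj⟩ := h
      exact Set.mem_biUnion hj ⟨hx, hxj⟩
  have h : P X ≤ P (X ∩ ⋂ j ∈ D, (A j)ᶜ) + ∑ j ∈ D, P (X ∩ A j) := by
    calc P X ≤ P ((X ∩ ⋂ j ∈ D, (A j)ᶜ) ∪ ⋃ j ∈ D, (X ∩ A j)) := measure_mono hsub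
    _ ≤ P (X ∩ ⋂ j ∈ D, (A j)ᶜ) + P (⋃ j ∈ D, (X ∩ A j)) := measure_union_le _ _
    _ ≤ P (X ∩ ⋂ j ∈ D, (A j)ᶜ) + ∑ j ∈ D, P (X ∩ A j) := by
        gcongr
        exact measure_biUnion_finset_le D _
  have hfin : (P (X ∩ ⋂ j ∈ D, (A j)ᶜ) + ∑ j ∈ D, P (X ∩ A j)) ≠ ⊤ := by
    apply ENNReal.add_ne_top.mpr
    constructor
    · exact measure_ne_top _ _
    · exact (ENNReal.sum_lt_top.mpr (fun j _ => measure_lt_top P _)).ne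
  have := ENNReal.toReal_mono hfin h
  rwa [ENNReal.toReal_add (measure_ne_top _ _)
      (ENNReal.sum_lt_top.mpr (fun j _ => measure_lt_top P _)).ne,
    ENNReal.toReal_sum (fun j _ => measure_ne_top _ _)] at this

end JansonAux

section JansonStep

variable {Ω : Type*} [MeasurableSpace Ω] (P : Measure Ω) [IsProbabilityMeasure P]

lemma aux_step (I : Set (Set Ω))
    (hcorr : ∀ A ∈ I, ∀ B ∈ I, P (A ∩ B) ≥ P A * P B)
    (hinter : ∀ A ∈ I, ∀ B ∈ I, A ∩ B ∈ I)
    (hunion : ∀ A ∈ I, ∀ B ∈ I, A ∪ B ∈ I)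
    {k : ℕ} {A : Fin k → Set Ω} (hA : ∀ i, A i ∈ I)
    (hAmeas : ∀ i, MeasurableSet (A i))
    (sim : Fin k → Fin k → Prop)
    (hsim : ∀ i j, sim i j ↔ i ≠ j ∧ P (A i ∩ A j) ≠ P (A i) * P (A j))
    (i : Fin k) (s : Finset (Fin k)) (hi : i ∉ s) :
    (P (⋂ j ∈ insert i s, (A j)ᶜ)).toReal ≤
      (P (⋂ j ∈ s, (A j)ᶜ)).toReal *
        Real.exp (-((P (A i)).toReal
          - ∑ j ∈ s.filter (fun j => sim i j), (P (A i ∩ A j)).toReal)) := by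
  classical
  set C : Set Ω := ⋂ j ∈ s, (A j)ᶜ with hCdef
  set t : ℝ := (P (A i)).toReal - ∑ j ∈ s.filter (fun j => sim i j), (P (A i ∩ A j)).toReal
    with htdef
  have hCmeas : MeasurableSet C :=
    s.measurableSet_biInter (fun j _ => (hAmeas j).compl)
  -- the measure of the new intersection
  have hins : (⋂ j ∈ insert i s, (A j)ᶜ) = C ∩ (A i)ᶜ := by
    rw [Finset.set_biInter_insert]; exact Set.inter_comm _ _
  have hsplit : (P (C ∩ A i)).toReal + (P (C ∩ (A i)ᶜ)).toReal = (P C).toReal :=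
    aux_split P C (hAmeas i)
  rw [hins]
  rcases le_or_gt t 0 with ht | ht
  · -- trivial case
    have h1 : (P (C ∩ (A i)ᶜ)).toReal ≤ (P C).toReal := by
      have := ENNReal.toReal_nonneg (a := P (C ∩ A i)); linarith
    have h2 : (1 : ℝ) ≤ Real.exp (-t) := by
      rw [Real.one_le_exp_iff]; linarith
    calc (P (C ∩ (A i)ᶜ)).toReal ≤ (P C).toReal := h1
    _ ≤ (P C).toReal * Real.exp (-t) :=
        le_mul_of_one_le_right ENNReal.toReal_nonneg h2
  · -- main case
    set D : Finset (Fin k) := s.filter (fun j => sim i j) with hDdef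
    set E : Finset (Fin k) := s.filter (fun j => ¬ sim i j) with hEdef
    set CE : Set Ω := ⋂ j ∈ E, (A j)ᶜ with hCEdef
    -- C = CD ∩ CE
    have hC_eq : C = (⋂ j ∈ D, (A j)ᶜ) ∩ CE := by
      rw [hCdef, hCEdef, hDdef, hEdef]
      rw [← Finset.set_biInter_inter]
      rw [Finset.filter_union_filter_not_eq]
    -- independence on E
    have hindE : ∀ j ∈ E, (P (A i ∩ A j)).toReal = (P (A i)).toReal * (P (A j)).toReal := by
      intro j hj
      rw [hEdef, Finset.mem_filter] at hj
      obtain ⟨hjs, hnsim⟩ := hj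
      rw [hsim] at hnsim
      push_neg at hnsim
      have hne : i ≠ j := by
        rintro rfl; exact hi hjs
      have := hnsim hne
      rw [this, ENNReal.toReal_mul]
    -- step b : P(Ai ∩ CE) ≥ P(Ai) P(CE)
    have hb : (P (A i)).toReal * (P CE).toReal ≤ (P (A i ∩ CE)).toReal :=
      aux_indep_compl P I hcorr hinter hunion hA hAmeas (hA i) (hAmeas i) E hindE
    -- step a : union bound
    have hXsets : (A i ∩ CE) ∩ (⋂ j ∈ D, (A j)ᶜ) = A i ∩ C := by
      rw [hC_eq]; ext x; simp only [Set.mem_inter_iff]; tauto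
    have ha : (P (A i ∩ CE)).toReal ≤ (P (A i ∩ C)).toReal
        + ∑ j ∈ D, (P ((A i ∩ CE) ∩ A j)).toReal := by
      have := aux_union_bound P (A := A) (A i ∩ CE) D
      rwa [hXsets] at this
    -- step c : for j ∈ D
    have hc : ∀ j ∈ D, (P ((A i ∩ CE) ∩ A j)).toReal
        ≤ (P (A i ∩ A j)).toReal * (P CE).toReal := by
      intro j hj
      have hseteq : (A i ∩ CE) ∩ A j = (A i ∩ A j) ∩ CE := by
        ext x; simp only [Set.mem_inter_iff]; tauto
      rw [hseteq]
      exact aux_key2 P I hcorr hunion hA hAmeas (hinter _ (hA i) _ (hA j)) E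
    -- monotonicity : P CE ≥ P C
    have hmono : (P C).toReal ≤ (P CE).toReal := by
      apply ENNReal.toReal_mono (measure_ne_top _ _)
      apply measure_mono
      rw [hC_eq]
      exact Set.inter_subset_right
    -- combine to h1 : t * P C ≤ P (Ai ∩ C)
    have hsumc : ∑ j ∈ D, (P ((A i ∩ CE) ∩ A j)).toReal
        ≤ (∑ j ∈ D, (P (A i ∩ A j)).toReal) * (P CE).toReal := by
      rw [Finset.sum_mul]
      exact Finset.sum_le_sum hc
    have h1 : t * (P C).toReal ≤ (P (A i ∩ C)).toReal := by
      have hkey : t * (P CE).toReal ≤ (P (A i ∩ C)).toReal := by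
        have : t * (P CE).toReal
            = (P (A i)).toReal * (P CE).toReal
              - (∑ j ∈ D, (P (A i ∩ A j)).toReal) * (P CE).toReal := by
          rw [htdef]; ring
        rw [this]
        linarith
      have : t * (P C).toReal ≤ t * (P CE).toReal :=
        mul_le_mul_of_nonneg_left hmono ht.le
      linarith
    -- conclude
    have hAiC : (P (A i ∩ C)).toReal = (P (C ∩ A i)).toReal := by rw [Set.inter_comm]
    have h2 : (P (C ∩ (A i)ᶜ)).toReal ≤ (P C).toReal * (1 - t) := by
      rw [mul_one_sub]
      have := h1
      rw [hAiC] at this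
      linarith
    have h3 : 1 - t ≤ Real.exp (-t) := by
      have := Real.add_one_le_exp (-t)
      linarith
    calc (P (C ∩ (A i)ᶜ)).toReal ≤ (P C).toReal * (1 - t) := h2
    _ ≤ (P C).toReal * Real.exp (-t) :=
        mul_le_mul_of_nonneg_left h3 ENNReal.toReal_nonneg

end JansonStep

/-- Janson's inequality `Pr(X = 0) ≤ exp(−μ + Δ/2)` for events in a family closed
under intersections and unions in which any two events are positively correlated. -/
theorem janson_inequality_general_upsets
    {Ω : Type*} [MeasurableSpace Ω] (P : Measure Ω) [IsProbabilityMeasure P]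
    (I : Set (Set Ω))
    (hcorr : ∀ A ∈ I, ∀ B ∈ I, P (A ∩ B) ≥ P A * P B)
    (hinter : ∀ A ∈ I, ∀ B ∈ I, A ∩ B ∈ I)
    (hunion : ∀ A ∈ I, ∀ B ∈ I, A ∪ B ∈ I)
    (k : ℕ) (A : Fin k → Set Ω) (hA : ∀ i, A i ∈ I)
    (hAmeas : ∀ i, MeasurableSet (A i))
    (sim : Fin k → Fin k → Prop)
    (hsim : ∀ i j, sim i j ↔ i ≠ j ∧ P (A i ∩ A j) ≠ P (A i) * P (A j))
    (μ Δ : ℝ)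
    (hμ : μ = ∑ i : Fin k, (P (A i)).toReal)
    (hΔ : Δ = ∑ i : Fin k, ∑ j ∈ Finset.univ.filter (fun j => sim i j),
        (P (A i ∩ A j)).toReal) :
    (P (⋂ i, (A i)ᶜ)).toReal ≤ Real.exp (-μ + Δ / 2) := by
  classical
  -- the main induction
  have claim : ∀ n : ℕ, n ≤ k →
      (P (⋂ j ∈ univ.filter (fun j : Fin k => (j : ℕ) < n), (A j)ᶜ)).toReal ≤
        Real.exp (∑ i ∈ univ.filter (fun i : Fin k => (i : ℕ) < n),
          (-((P (A i)).toReal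
            - ∑ j ∈ (univ.filter (fun j : Fin k => (j : ℕ) < (i : ℕ))).filter
                (fun j => sim i j), (P (A i ∩ A j)).toReal))) := by
    intro n
    induction n with
    | zero => intro _; simp
    | succ n ih =>
      intro hn
      have hnk : n < k := hn
      set i : Fin k := ⟨n, hnk⟩ with hidef
      have hSins : univ.filter (fun j : Fin k => (j : ℕ) < n + 1)
          = insert i (univ.filter (fun j : Fin k => (j : ℕ) < n)) := by
        ext j
        simp only [Finset.mem_filter, Finset.mem_univ, true_and, Finset.mem_insert]
        constructor
        · intro hj
          rcases Nat.lt_succ_iff_lt_or_eq.mp hj with h | h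
          · exact Or.inr h
          · exact Or.inl (Fin.ext h)
        · rintro (rfl | h)
          · exact Nat.lt_succ_self n
          · exact Nat.lt_succ_of_lt h
      have hinot : i ∉ univ.filter (fun j : Fin k => (j : ℕ) < n) := by
        simp [hidef]
      have hstep := aux_step P I hcorr hinter hunion hA hAmeas sim hsim i _ hinot
      rw [hSins, Finset.sum_insert hinot]
      have hfilter_eq : (univ.filter (fun j : Fin k => (j : ℕ) < n)).filter (fun j => sim i j)
          = (univ.filter (fun j : Fin k => (j : ℕ) < (i : ℕ))).filter (fun j => sim i j) := rfl
      calc (P (⋂ j ∈ insert i (univ.filter (fun j : Fin k => (j : ℕ) < n)), (A j)ᶜ)).toReal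
          ≤ (P (⋂ j ∈ univ.filter (fun j : Fin k => (j : ℕ) < n), (A j)ᶜ)).toReal *
              Real.exp (-((P (A i)).toReal
                - ∑ j ∈ (univ.filter (fun j : Fin k => (j : ℕ) < n)).filter
                    (fun j => sim i j), (P (A i ∩ A j)).toReal)) := hstep
        _ ≤ Real.exp (∑ i' ∈ univ.filter (fun i' : Fin k => (i' : ℕ) < n),
              (-((P (A i')).toReal
                - ∑ j ∈ (univ.filter (fun j : Fin k => (j : ℕ) < (i' : ℕ))).filter
                    (fun j => sim i' j), (P (A i' ∩ A j)).toReal))) *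
              Real.exp (-((P (A i)).toReal
                - ∑ j ∈ (univ.filter (fun j : Fin k => (j : ℕ) < n)).filter
                    (fun j => sim i j), (P (A i ∩ A j)).toReal)) := by
            apply mul_le_mul_of_nonneg_right (ih (le_of_lt hnk)) (Real.exp_nonneg _)
        _ = Real.exp (-((P (A i)).toReal
                - ∑ j ∈ (univ.filter (fun j : Fin k => (j : ℕ) < (i : ℕ))).filter
                    (fun j => sim i j), (P (A i ∩ A j)).toReal)
              + ∑ i' ∈ univ.filter (fun i' : Fin k => (i' : ℕ) < n),
                (-((P (A i')).toReal
                  - ∑ j ∈ (univ.filter (fun j : Fin k => (j : ℕ) < (i' : ℕ))).filter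
                      (fun j => sim i' j), (P (A i' ∩ A j)).toReal))) := by
            rw [← Real.exp_add, ← hfilter_eq, add_comm]
  have hclaimk := claim k (le_refl k)
  have hfiltk : univ.filter (fun j : Fin k => (j : ℕ) < k) = (univ : Finset (Fin k)) :=
    Finset.filter_true_of_mem (fun j _ => j.isLt)
  rw [hfiltk] at hclaimk
  have hInter : (⋂ j ∈ (univ : Finset (Fin k)), (A j)ᶜ) = ⋂ i, (A i)ᶜ := by
    simp
  rw [hInter] at hclaimk
  -- it remains to identify the exponent
  -- define F
  set F : Fin k → Fin k → ℝ :=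
    fun i j => if sim i j then (P (A i ∩ A j)).toReal else 0 with hFdef
  have hFsymm : ∀ i j, F i j = F j i := by
    intro i j
    by_cases h : sim i j
    · have h' : sim j i := by
        rw [hsim] at h ⊢
        exact ⟨h.1.symm, by rw [Set.inter_comm, mul_comm]; exact h.2⟩
      simp [hFdef, h, h', Set.inter_comm]
    · have h' : ¬ sim j i := by
        intro hc
        apply h
        rw [hsim] at hc ⊢
        exact ⟨hc.1.symm, by rw [Set.inter_comm, mul_comm]; exact hc.2⟩
      simp [hFdef, h, h']
  have hFdiag : ∀ i, F i i = 0 := by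
    intro i
    have : ¬ sim i i := by rw [hsim]; simp
    simp [hFdef, this]
  -- Δ in terms of F
  have hΔF : Δ = ∑ i : Fin k, ∑ j : Fin k, F i j := by
    rw [hΔ]
    congr 1
    ext i
    rw [Finset.sum_filter]
  -- split each inner sum at i
  have hsplit : ∀ i : Fin k, ∑ j : Fin k, F i j
      = (∑ j ∈ univ.filter (fun j => j < i), F i j)
        + ∑ j ∈ univ.filter (fun j => i < j), F i j := by
    intro i
    rw [← Finset.sum_filter_add_sum_filter_not univ (fun j => j < i) (F i)]
    congr 1
    rw [← Finset.sum_filter_add_sum_filter_not (univ.filter (fun j => ¬ j < i))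
      (fun j => i < j) (F i)]
    have e1 : (univ.filter (fun j => ¬ j < i)).filter (fun j => i < j)
        = univ.filter (fun j : Fin k => i < j) := by
      rw [Finset.filter_filter]
      apply Finset.filter_congr
      intro j _
      constructor
      · exact fun h => h.2
      · exact fun h => ⟨asymm h, h⟩
    have e2 : (univ.filter (fun j => ¬ j < i)).filter (fun j => ¬ i < j) = {i} := by
      rw [Finset.filter_filter]
      ext j
      simp only [Finset.mem_filter, Finset.mem_univ, true_and, Finset.mem_singleton,
        not_lt]
      constructor
      · exact fun h => le_antisymm h.2 h.1
      · rintro rfl; exact ⟨le_refl _, le_refl _⟩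
    rw [e1, e2, Finset.sum_singleton, hFdiag]
    ring
  -- the swap
  have hswap : ∑ i : Fin k, ∑ j ∈ univ.filter (fun j => i < j), F i j
      = ∑ i : Fin k, ∑ j ∈ univ.filter (fun j => j < i), F i j := by
    rw [Finset.sum_comm' (t' := univ) (s' := fun j => univ.filter (fun i => i < j))
      (by intro x y; simp)]
    apply Finset.sum_congr rfl
    intro j _
    apply Finset.sum_congr rfl
    intro i _
    exact hFsymm i j
  have hΔ2 : Δ = 2 * ∑ i : Fin k, ∑ j ∈ univ.filter (fun j => j < i), F i j := by
    rw [hΔF]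
    rw [Finset.sum_congr rfl (fun i _ => hsplit i), Finset.sum_add_distrib, hswap]
    ring
  -- identify per-i inner sums
  have hinner : ∀ i : Fin k,
      ∑ j ∈ (univ.filter (fun j : Fin k => (j : ℕ) < (i : ℕ))).filter (fun j => sim i j),
        (P (A i ∩ A j)).toReal
      = ∑ j ∈ univ.filter (fun j => j < i), F i j := by
    intro i
    rw [Finset.sum_filter]
    apply Finset.sum_congr
    · apply Finset.filter_congr
      intro j _
      exact Iff.rfl
    · intro j _; rfl
  -- final exponent identity
  have hexp : ∑ i : Fin k,
      (-((P (A i)).toReal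
        - ∑ j ∈ (univ.filter (fun j : Fin k => (j : ℕ) < (i : ℕ))).filter
            (fun j => sim i j), (P (A i ∩ A j)).toReal))
      = -μ + Δ / 2 := by
    have : ∀ i : Fin k,
        (-((P (A i)).toReal
          - ∑ j ∈ (univ.filter (fun j : Fin k => (j : ℕ) < (i : ℕ))).filter
              (fun j => sim i j), (P (A i ∩ A j)).toReal))
        = -(P (A i)).toReal + ∑ j ∈ univ.filter (fun j => j < i), F i j := by
      intro i
      rw [hinner i]
      ring
    rw [Finset.sum_congr rfl (fun i _ => this i), Finset.sum_add_distrib,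
      Finset.sum_neg_distrib, hμ, hΔ2]
    ring
  rw [hexp] at hclaimk
  exact hclaimk
end

section
/- Let A_1, ..., A_k be increasing events in a finite product probability space {0,1}^S with product measure. Let X count how many A_i occur, μ = E[X], and Δ = Σ_i Σ_{j~i} Pr(A_i ∩ A_j) over ordered pairs of dependent events. Then for all 0 ≤ t ≤ μ, Pr(X ≤ μ − t) ≤ exp(−t²/(2(μ + Δ))). -/
open MeasureTheory Finset Real
open scoped Classical

set_option linter.unusedSectionVars false

namespace JansonAux

variable {S : Type*} [Fintype S]

noncomputable def K (c : S → Bool → ℝ) (s : S) (f : (S → Bool) → ℝ) : (S → Bool) → ℝ :=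
  fun ω => c s false * f (Function.update ω s false) + c s true * f (Function.update ω s true)

noncomputable def KL (c : S → Bool → ℝ) : List S → ((S → Bool) → ℝ) → ((S → Bool) → ℝ)
  | [], f => f
  | s :: l, f => K c s (KL c l f)

noncomputable def W (c : S → Bool → ℝ) (ω : S → Bool) : ℝ := ∏ s, c s (ω s)

noncomputable def EE (c : S → Bool → ℝ) (f : (S → Bool) → ℝ) : ℝ :=
  ∑ ω : S → Bool, W c ω * f ω

def NotDep (f : (S → Bool) → ℝ) (s : S) : Prop :=
  ∀ ω b, f (Function.update ω s b) = f ω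

lemma update_le_update {ω ω' : S → Bool} (h : ω ≤ ω') (s : S) (b : Bool) :
    Function.update ω s b ≤ Function.update ω' s b := by
  intro s'
  by_cases hs : s' = s
  · subst hs; simp
  · simp only [Function.update_of_ne hs]; exact h s'

lemma update_false_le_true (ω : S → Bool) (s : S) :
    Function.update ω s false ≤ Function.update ω s true := by
  intro s'
  by_cases hs : s' = s
  · subst hs; simp
  · simp [Function.update_of_ne hs]

section K
variable {c : S → Bool → ℝ}

lemma K_mono_op (hc0 : ∀ s b, 0 ≤ c s b) {s : S} {f g : (S → Bool) → ℝ}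
    (h : ∀ ω, f ω ≤ g ω) (ω : S → Bool) :
    K c s f ω ≤ K c s g ω :=
  add_le_add (mul_le_mul_of_nonneg_left (h _) (hc0 s false))
    (mul_le_mul_of_nonneg_left (h _) (hc0 s true))

lemma K_const (hc1 : ∀ s, c s false + c s true = 1) {s : S} (r : ℝ) :
    K c s (fun _ => r) = fun _ => r := by
  funext ω; simp only [K]; linear_combination r * hc1 s

lemma K_smul {s : S} (r : ℝ) (f : (S → Bool) → ℝ) :
    K c s (fun ω => r * f ω) = fun ω => r * K c s f ω := by
  funext ω; simp only [K]; ring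

lemma K_sub {s : S} (f g : (S → Bool) → ℝ) :
    K c s (fun ω => f ω - g ω) = fun ω => K c s f ω - K c s g ω := by
  funext ω; simp only [K]; ring

lemma K_monotone (hc0 : ∀ s b, 0 ≤ c s b) {s : S} {f : (S → Bool) → ℝ} (hf : Monotone f) :
    Monotone (K c s f) := by
  intro ω ω' h
  exact add_le_add (mul_le_mul_of_nonneg_left (hf (update_le_update h s false)) (hc0 s false))
    (mul_le_mul_of_nonneg_left (hf (update_le_update h s true)) (hc0 s true))

lemma K_antitone (hc0 : ∀ s b, 0 ≤ c s b) {s : S} {f : (S → Bool) → ℝ} (hf : Antitone f) :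
    Antitone (K c s f) := by
  intro ω ω' h
  exact add_le_add (mul_le_mul_of_nonneg_left (hf (update_le_update h s false)) (hc0 s false))
    (mul_le_mul_of_nonneg_left (hf (update_le_update h s true)) (hc0 s true))

lemma K_notdep_self {s : S} (f : (S → Bool) → ℝ) : NotDep (K c s f) s := by
  intro ω b; simp only [K, Function.update_idem]

lemma K_notdep {s s' : S} {f : (S → Bool) → ℝ} (h : NotDep f s') :
    NotDep (K c s f) s' := by
  by_cases hss : s = s'
  · subst hss; exact K_notdep_self f
  · intro ω b
    have e : ∀ b' : Bool, Function.update (Function.update ω s' b) s b' =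
        Function.update (Function.update ω s b') s' b :=
      fun b' => Function.update_comm (fun hh => hss hh.symm) b b' ω
    simp only [K, e]
    rw [h _ b, h _ b]

lemma K_of_notdep (hc1 : ∀ s, c s false + c s true = 1) {s : S} {f : (S → Bool) → ℝ}
    (h : NotDep f s) : K c s f = f := by
  funext ω; simp only [K, h ω]; linear_combination (f ω) * hc1 s

lemma K_mul_left {s : S} {f : (S → Bool) → ℝ} (g : (S → Bool) → ℝ) (h : NotDep f s) :
    K c s (fun ω => f ω * g ω) = fun ω => f ω * K c s g ω := by
  funext ω; simp only [K, h ω]; ring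

/-- key identity for the Harris step -/
lemma K_mul_expand (hc1 : ∀ s, c s false + c s true = 1) {s : S} (f g : (S → Bool) → ℝ)
    (ω : S → Bool) :
    K c s (fun ω => f ω * g ω) ω = K c s f ω * K c s g ω
      + c s false * c s true *
        ((f (Function.update ω s true) - f (Function.update ω s false)) *
         (g (Function.update ω s true) - g (Function.update ω s false))) := by
  have h1 : c s true = 1 - c s false := by have := hc1 s; linarith
  simp only [K, h1]; ring

lemma K_harris_mono (hc0 : ∀ s b, 0 ≤ c s b) (hc1 : ∀ s, c s false + c s true = 1)
    {s : S} {f g : (S → Bool) → ℝ} (hf : Monotone f) (hg : Monotone g) (ω : S → Bool) :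
    K c s f ω * K c s g ω ≤ K c s (fun ω => f ω * g ω) ω := by
  rw [K_mul_expand hc1 f g ω]
  have h2 : 0 ≤ f (Function.update ω s true) - f (Function.update ω s false) :=
    sub_nonneg.mpr (hf (update_false_le_true ω s))
  have h3 : 0 ≤ g (Function.update ω s true) - g (Function.update ω s false) :=
    sub_nonneg.mpr (hg (update_false_le_true ω s))
  nlinarith [mul_nonneg (hc0 s false) (hc0 s true), mul_nonneg h2 h3]

lemma K_harris_anti (hc0 : ∀ s b, 0 ≤ c s b) (hc1 : ∀ s, c s false + c s true = 1)
    {s : S} {f g : (S → Bool) → ℝ} (hf : Antitone f) (hg : Antitone g) (ω : S → Bool) :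
    K c s f ω * K c s g ω ≤ K c s (fun ω => f ω * g ω) ω := by
  rw [K_mul_expand hc1 f g ω]
  have h2 : f (Function.update ω s true) - f (Function.update ω s false) ≤ 0 :=
    sub_nonpos.mpr (hf (update_false_le_true ω s))
  have h3 : g (Function.update ω s true) - g (Function.update ω s false) ≤ 0 :=
    sub_nonpos.mpr (hg (update_false_le_true ω s))
  nlinarith [mul_nonneg (hc0 s false) (hc0 s true), mul_nonneg (neg_nonneg.2 h2) (neg_nonneg.2 h3)]

end K

section KL
variable {c : S → Bool → ℝ}

lemma KL_mono_op (hc0 : ∀ s b, 0 ≤ c s b) {l : List S} {f g : (S → Bool) → ℝ}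
    (h : ∀ ω, f ω ≤ g ω) : ∀ ω, KL c l f ω ≤ KL c l g ω := by
  induction l with
  | nil => exact h
  | cons a l ih => exact fun ω => K_mono_op hc0 ih ω

lemma KL_const (hc1 : ∀ s, c s false + c s true = 1) (l : List S) (r : ℝ) :
    KL c l (fun _ => r) = fun _ => r := by
  induction l with
  | nil => rfl
  | cons a l ih => show K c a (KL c l fun _ => r) = _; rw [ih, K_const hc1]

lemma KL_smul (l : List S) (r : ℝ) (f : (S → Bool) → ℝ) :
    KL c l (fun ω => r * f ω) = fun ω => r * KL c l f ω := by
  induction l with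
  | nil => rfl
  | cons a l ih =>
    show K c a (KL c l fun ω => r * f ω) = _
    rw [ih, K_smul]; rfl

lemma KL_sub (l : List S) (f g : (S → Bool) → ℝ) :
    KL c l (fun ω => f ω - g ω) = fun ω => KL c l f ω - KL c l g ω := by
  induction l with
  | nil => rfl
  | cons a l ih =>
    show K c a (KL c l fun ω => f ω - g ω) = _
    rw [ih, K_sub]; rfl

lemma KL_monotone (hc0 : ∀ s b, 0 ≤ c s b) {l : List S} {f : (S → Bool) → ℝ}
    (hf : Monotone f) : Monotone (KL c l f) := by
  induction l with
  | nil => exact hf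
  | cons a l ih => exact K_monotone hc0 ih

lemma KL_antitone (hc0 : ∀ s b, 0 ≤ c s b) {l : List S} {f : (S → Bool) → ℝ}
    (hf : Antitone f) : Antitone (KL c l f) := by
  induction l with
  | nil => exact hf
  | cons a l ih => exact K_antitone hc0 ih

lemma KL_notdep {l : List S} {s : S} {f : (S → Bool) → ℝ} (h : s ∈ l ∨ NotDep f s) :
    NotDep (KL c l f) s := by
  induction l with
  | nil =>
    rcases h with h | h
    · exact absurd h List.not_mem_nil
    · exact h
  | cons a l ih =>
    by_cases has : a = s
    · subst has; exact K_notdep_self _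
    · refine K_notdep (ih ?_)
      rcases h with h | h
      · rcases List.mem_cons.mp h with h | h
        · exact absurd h.symm has
        · exact Or.inl h
      · exact Or.inr h

lemma KL_mul_left {l : List S} {f : (S → Bool) → ℝ} (g : (S → Bool) → ℝ)
    (h : ∀ s ∈ l, NotDep f s) :
    KL c l (fun ω => f ω * g ω) = fun ω => f ω * KL c l g ω := by
  induction l with
  | nil => rfl
  | cons a l ih =>
    show K c a (KL c l fun ω => f ω * g ω) = _
    rw [ih (fun s hs => h s (List.mem_cons_of_mem a hs)),
      K_mul_left _ (h a ((List.mem_cons_self (a := a) (l := l))))]; rfl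

lemma KL_harris_mono (hc0 : ∀ s b, 0 ≤ c s b) (hc1 : ∀ s, c s false + c s true = 1)
    {l : List S} {f g : (S → Bool) → ℝ} (hf : Monotone f) (hg : Monotone g) (ω : S → Bool) :
    KL c l f ω * KL c l g ω ≤ KL c l (fun ω => f ω * g ω) ω := by
  induction l generalizing ω with
  | nil => exact le_refl _
  | cons a l ih =>
    calc K c a (KL c l f) ω * K c a (KL c l g) ω
        ≤ K c a (fun ω => KL c l f ω * KL c l g ω) ω :=
          K_harris_mono hc0 hc1 (KL_monotone hc0 hf) (KL_monotone hc0 hg) ω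
      _ ≤ K c a (KL c l fun ω => f ω * g ω) ω := K_mono_op hc0 (fun ω' => ih ω') ω

lemma KL_harris_anti (hc0 : ∀ s b, 0 ≤ c s b) (hc1 : ∀ s, c s false + c s true = 1)
    {l : List S} {f g : (S → Bool) → ℝ} (hf : Antitone f) (hg : Antitone g) (ω : S → Bool) :
    KL c l f ω * KL c l g ω ≤ KL c l (fun ω => f ω * g ω) ω := by
  induction l generalizing ω with
  | nil => exact le_refl _
  | cons a l ih =>
    calc K c a (KL c l f) ω * K c a (KL c l g) ω
        ≤ K c a (fun ω => KL c l f ω * KL c l g ω) ω :=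
          K_harris_anti hc0 hc1 (KL_antitone hc0 hf) (KL_antitone hc0 hg) ω
      _ ≤ K c a (KL c l fun ω => f ω * g ω) ω := K_mono_op hc0 (fun ω' => ih ω') ω

lemma KL_append (l₁ l₂ : List S) (f : (S → Bool) → ℝ) :
    KL c (l₁ ++ l₂) f = KL c l₁ (KL c l₂ f) := by
  induction l₁ with
  | nil => rfl
  | cons a l ih => show K c a (KL c (l ++ l₂) f) = _; rw [ih]; rfl

lemma KL_comp_update {l : List S} {s : S} (hs : s ∉ l) (b : Bool) (f : (S → Bool) → ℝ)
    (ω : S → Bool) :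
    KL c l (fun ω => f (Function.update ω s b)) ω = KL c l f (Function.update ω s b) := by
  induction l generalizing ω with
  | nil => rfl
  | cons a l ih =>
    have has : a ≠ s := fun h => hs (h ▸ (List.mem_cons_self (a := a) (l := l)))
    have hsl : s ∉ l := fun h => hs (List.mem_cons_of_mem a h)
    show K c a (KL c l fun ω => f (Function.update ω s b)) ω = _
    have hcomm : ∀ b' : Bool, Function.update (Function.update ω a b') s b =
        Function.update (Function.update ω s b) a b' :=
      fun b' => Function.update_comm has b' b ω
    simp only [K, ih hsl, hcomm]
    rfl

end KL

section EE
variable {c : S → Bool → ℝ}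

lemma W_nonneg (hc0 : ∀ s b, 0 ≤ c s b) (ω : S → Bool) : 0 ≤ W c ω :=
  Finset.prod_nonneg fun s _ => hc0 s (ω s)

lemma W_sum (hc1 : ∀ s, c s false + c s true = 1) : ∑ ω : S → Bool, W c ω = 1 := by
  unfold W
  rw [show (Finset.univ : Finset (S → Bool)) = Fintype.piFinset (fun _ => Finset.univ) from
    (Fintype.piFinset_univ).symm, ← Finset.prod_univ_sum]
  refine Finset.prod_eq_one fun s _ => ?_
  rw [Fintype.sum_bool]; linarith [hc1 s]

lemma EE_mono (hc0 : ∀ s b, 0 ≤ c s b) {f g : (S → Bool) → ℝ} (h : ∀ ω, f ω ≤ g ω) :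
    EE c f ≤ EE c g :=
  Finset.sum_le_sum fun ω _ => mul_le_mul_of_nonneg_left (h ω) (W_nonneg hc0 ω)

lemma EE_nonneg (hc0 : ∀ s b, 0 ≤ c s b) {f : (S → Bool) → ℝ} (h : ∀ ω, 0 ≤ f ω) :
    0 ≤ EE c f :=
  Finset.sum_nonneg fun ω _ => mul_nonneg (W_nonneg hc0 ω) (h ω)

lemma EE_const (hc1 : ∀ s, c s false + c s true = 1) (r : ℝ) : EE c (fun _ => r) = r := by
  unfold EE
  rw [← Finset.sum_mul, W_sum hc1, one_mul]

lemma EE_congr {f g : (S → Bool) → ℝ} (h : ∀ ω, W c ω ≠ 0 → f ω = g ω) : EE c f = EE c g := by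
  refine Finset.sum_congr rfl fun ω _ => ?_
  by_cases hW : W c ω = 0
  · rw [hW, zero_mul, zero_mul]
  · rw [h ω hW]

lemma EE_sum {ι : Type*} (t : Finset ι) (f : ι → (S → Bool) → ℝ) :
    EE c (fun ω => ∑ j ∈ t, f j ω) = ∑ j ∈ t, EE c (f j) := by
  unfold EE
  simp_rw [Finset.mul_sum]
  exact Finset.sum_comm

lemma EE_smul (r : ℝ) (f : (S → Bool) → ℝ) : EE c (fun ω => r * f ω) = r * EE c f := by
  unfold EE; rw [Finset.mul_sum]; exact Finset.sum_congr rfl fun ω _ => by ring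

lemma EE_sub (f g : (S → Bool) → ℝ) :
    EE c (fun ω => f ω - g ω) = EE c f - EE c g := by
  unfold EE; rw [← Finset.sum_sub_distrib]; exact Finset.sum_congr rfl fun ω _ => by ring

lemma EE_K (hc1 : ∀ s, c s false + c s true = 1) (s : S) (f : (S → Bool) → ℝ) :
    EE c (K c s f) = EE c f := by
  classical
  set R : (S → Bool) → ℝ := fun ω => ∏ s' ∈ Finset.univ.erase s, c s' (ω s') with hR
  have hW : ∀ ω : S → Bool, W c ω = c s (ω s) * R ω :=
    fun ω => (Finset.mul_prod_erase Finset.univ _ (Finset.mem_univ s)).symm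
  have hRup : ∀ (ω : S → Bool) (b : Bool), R (Function.update ω s b) = R ω := by
    intro ω b
    refine Finset.prod_congr rfl fun s' hs' => ?_
    rw [Function.update_of_ne (Finset.mem_erase.mp hs').1]
  have hfilter : (Finset.univ.filter fun ω : S → Bool => ¬ (ω s = false))
      = Finset.univ.filter fun ω : S → Bool => ω s = true := by
    ext ω; simp
  have upid : ∀ a : S → Bool, a s = true →
      Function.update (Function.update a s false) s true = a := by
    intro a ha2; rw [Function.update_idem, ← ha2, Function.update_eq_self]
  have upid' : ∀ a : S → Bool, a s = false →
      Function.update (Function.update a s true) s false = a := by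
    intro a ha2; rw [Function.update_idem, ← ha2, Function.update_eq_self]
  have key : ∀ u : (S → Bool) → ℝ,
      ∑ ω ∈ Finset.univ.filter (fun ω : S → Bool => ω s = true), u ω
      = ∑ ω ∈ Finset.univ.filter (fun ω : S → Bool => ω s = false),
          u (Function.update ω s true) := by
    intro u
    refine Finset.sum_nbij' (fun ω => Function.update ω s false)
      (fun ω => Function.update ω s true) ?_ ?_ ?_ ?_ ?_
    · intro a ha; simp
    · intro a ha; simp
    · intro a ha
      simp only [Finset.mem_filter] at ha
      exact upid a ha.2
    · intro a ha
      simp only [Finset.mem_filter] at ha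
      exact upid' a ha.2
    · intro a ha
      simp only [Finset.mem_filter] at ha
      exact congrArg u (upid a ha.2).symm
  have split : ∀ u : (S → Bool) → ℝ, ∑ ω : S → Bool, u ω
      = ∑ ω ∈ Finset.univ.filter (fun ω : S → Bool => ω s = false),
          (u ω + u (Function.update ω s true)) := by
    intro u
    rw [← Finset.sum_filter_add_sum_filter_not Finset.univ (fun ω : S → Bool => ω s = false) u,
      hfilter, key u, Finset.sum_add_distrib]
  have upfalse : ∀ ω : S → Bool, ω s = false → Function.update ω s false = ω := by
    intro ω hω; rw [← hω, Function.update_eq_self]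
  rw [show EE c (K c s f) = ∑ ω : S → Bool, W c ω * K c s f ω from rfl,
    show EE c f = ∑ ω : S → Bool, W c ω * f ω from rfl, split, split]
  refine Finset.sum_congr rfl fun ω hω => ?_
  have hωs : ω s = false := (Finset.mem_filter.mp hω).2
  have hKf : K c s f (Function.update ω s true) = K c s f ω := K_notdep_self f ω true
  have e1 : W c ω = c s false * R ω := by rw [hW, hωs]
  have e2 : W c (Function.update ω s true) = c s true * R ω := by
    rw [hW, Function.update_self, hRup]
  have hKexp : K c s f ω = c s false * f ω + c s true * f (Function.update ω s true) := by
    simp only [K, upfalse ω hωs]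
  rw [hKf, e1, e2, hKexp]
  linear_combination (R ω * (c s false * f ω + c s true * f (Function.update ω s true))) * hc1 s

lemma EE_KL (hc1 : ∀ s, c s false + c s true = 1) (l : List S) (f : (S → Bool) → ℝ) :
    EE c (KL c l f) = EE c f := by
  induction l with
  | nil => rfl
  | cons a l ih => rw [show KL c (a :: l) f = K c a (KL c l f) from rfl, EE_K hc1, ih]

lemma eq_of_notdep {g : (S → Bool) → ℝ} (D : Finset S) :
    ∀ ω ω' : S → Bool, (∀ s, s ∉ D → ω s = ω' s) → (∀ s ∈ D, NotDep g s) → g ω = g ω' := by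
  classical
  induction D using Finset.induction with
  | empty =>
    intro ω ω' hagree _
    congr 1; funext s; exact hagree s (by simp)
  | @insert a D ha ih =>
    intro ω ω' hagree hdep
    have h1 : g ω = g (Function.update ω a (ω' a)) :=
      (hdep a (Finset.mem_insert_self a D) ω (ω' a)).symm
    rw [h1]
    refine ih (Function.update ω a (ω' a)) ω' ?_ ?_
    · intro s hs
      by_cases hsa : s = a
      · subst hsa; simp
      · rw [Function.update_of_ne hsa]
        exact hagree s (by simp [hs, hsa])
    · intro s hs; exact hdep s (Finset.mem_insert_of_mem hs)

lemma KL_eq_EE (hc1 : ∀ s, c s false + c s true = 1) {l : List S} {f : (S → Bool) → ℝ}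
    (h : ∀ s, s ∈ l ∨ NotDep f s) (ω : S → Bool) : KL c l f ω = EE c f := by
  have hconst : ∀ ω' : S → Bool, KL c l f ω = KL c l f ω' := by
    intro ω'
    exact eq_of_notdep Finset.univ ω ω' (fun s hs => absurd (Finset.mem_univ s) hs)
      (fun s _ => KL_notdep (h s))
  calc KL c l f ω = EE c (fun _ => KL c l f ω) := (EE_const hc1 _).symm
    _ = EE c (KL c l f) := Finset.sum_congr rfl fun ω' _ => by rw [hconst ω']
    _ = EE c f := EE_KL hc1 l f

end EE

section Core
variable {c : S → Bool → ℝ}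

lemma NotDep_sum {ι : Type*} (t : Finset ι) (f : ι → (S → Bool) → ℝ) {s : S}
    (h : ∀ j ∈ t, NotDep (f j) s) : NotDep (fun ω => ∑ j ∈ t, f j ω) s :=
  fun ω b => Finset.sum_congr rfl fun j hj => h j hj ω b

lemma NotDep_comp {f : (S → Bool) → ℝ} {s : S} (h : NotDep f s) (G : ℝ → ℝ) :
    NotDep (fun ω => G (f ω)) s := fun ω b => by
  show G (f (Function.update ω s b)) = G (f ω); rw [h]

lemma NotDep_comp_update {f : (S → Bool) → ℝ} {s s' : S} (h : NotDep f s') (hne : s ≠ s')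
    (b : Bool) : NotDep (fun ω => f (Function.update ω s b)) s' := by
  intro ω b'
  show f (Function.update (Function.update ω s' b') s b) = f (Function.update ω s b)
  rw [Function.update_comm (fun hh => hne hh.symm) b' b ω, h]

lemma harris_point (hc0 : ∀ s b, 0 ≤ c s b) (hc1 : ∀ s, c s false + c s true = 1)
    (s : S) (f g : (S → Bool) → ℝ) (hf : Monotone f) (hg : Monotone g) :
    EE c f * EE c g
      + c s false * c s true
        * EE c (fun ω => f (Function.update ω s true) - f (Function.update ω s false))
        * EE c (fun ω => g (Function.update ω s true) - g (Function.update ω s false))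
      ≤ EE c (fun ω => f ω * g ω) := by
  classical
  set ω₀ : S → Bool := fun _ => false with hω₀
  set l : List S := (Finset.univ.erase s).toList with hl
  have hsl : s ∉ l := by
    rw [hl]; simp [Finset.mem_toList]
  have hcov : ∀ s' : S, s' ∈ (s :: l) := by
    intro s'
    by_cases h : s' = s
    · rw [h]; exact (List.mem_cons_self (a := s) (l := l))
    · exact List.mem_cons_of_mem s (Finset.mem_toList.mpr (Finset.mem_erase.mpr ⟨h, Finset.mem_univ s'⟩))
  have hE : ∀ u : (S → Bool) → ℝ, EE c u = KL c (s :: l) u ω₀ :=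
    fun u => (KL_eq_EE hc1 (fun s' => Or.inl (hcov s')) ω₀).symm
  -- difference functions
  set Df : (S → Bool) → ℝ :=
    fun ω => f (Function.update ω s true) - f (Function.update ω s false) with hDfdef
  set Dg : (S → Bool) → ℝ :=
    fun ω => g (Function.update ω s true) - g (Function.update ω s false) with hDgdef
  have hDcov : ∀ (u : (S → Bool) → ℝ) (s' : S), s' ∈ l ∨
      NotDep (fun ω => u (Function.update ω s true) - u (Function.update ω s false)) s' := by
    intro u s'
    by_cases h : s' = s
    · subst h
      refine Or.inr fun ω b => ?_
      simp only [Function.update_idem]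
    · exact Or.inl (Finset.mem_toList.mpr (Finset.mem_erase.mpr ⟨h, Finset.mem_univ s'⟩))
  have hDf1 : KL c l Df ω₀ = EE c Df := KL_eq_EE hc1 (hDcov f) ω₀
  have hDg1 : KL c l Dg ω₀ = EE c Dg := KL_eq_EE hc1 (hDcov g) ω₀
  set U : (S → Bool) → ℝ := KL c l f with hU
  set V : (S → Bool) → ℝ := KL c l g with hV
  have hUdiff : U (Function.update ω₀ s true) - U (Function.update ω₀ s false) = EE c Df := by
    rw [← hDf1, hDfdef, hU]
    rw [KL_sub]
    simp only
    rw [KL_comp_update hsl true f ω₀, KL_comp_update hsl false f ω₀]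
  have hVdiff : V (Function.update ω₀ s true) - V (Function.update ω₀ s false) = EE c Dg := by
    rw [← hDg1, hDgdef, hV]
    rw [KL_sub]
    simp only
    rw [KL_comp_update hsl true g ω₀, KL_comp_update hsl false g ω₀]
  have hKU : K c s U ω₀ = EE c f := by rw [hE f]; rfl
  have hKV : K c s V ω₀ = EE c g := by rw [hE g]; rfl
  have step1 : K c s (fun ω => U ω * V ω) ω₀ ≤ KL c (s :: l) (fun ω => f ω * g ω) ω₀ :=
    K_mono_op hc0 (fun ω => KL_harris_mono hc0 hc1 hf hg ω) ω₀
  have step2 : K c s (fun ω => U ω * V ω) ω₀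
      = EE c f * EE c g + c s false * c s true * (EE c Df * EE c Dg) := by
    rw [K_mul_expand hc1 U V ω₀, hKU, hKV, hUdiff, hVdiff]
  rw [hE (fun ω => f ω * g ω)]
  calc EE c f * EE c g + c s false * c s true * EE c Df * EE c Dg
      = EE c f * EE c g + c s false * c s true * (EE c Df * EE c Dg) := by ring
    _ = K c s (fun ω => U ω * V ω) ω₀ := step2.symm
    _ ≤ KL c (s :: l) (fun ω => f ω * g ω) ω₀ := step1

lemma essential_pos (hc0 : ∀ s b, 0 ≤ c s b) (hc1 : ∀ s, c s false + c s true = 1)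
    {χ : (S → Bool) → ℝ} (hmono : Monotone χ) (h01 : ∀ ω, χ ω = 0 ∨ χ ω = 1)
    (hdet : ∀ s, (c s false = 0 ∨ c s true = 0) → NotDep χ s)
    {s : S} (hs : ¬ NotDep χ s) :
    0 < EE c (fun ω => χ (Function.update ω s true) - χ (Function.update ω s false)) := by
  classical
  -- extract witness
  have hwit : ∃ ω : S → Bool, χ (Function.update ω s false) = 0 ∧
      χ (Function.update ω s true) = 1 := by
    rw [NotDep] at hs
    push_neg at hs
    obtain ⟨ω, b, hωb⟩ := hs
    have hne : χ (Function.update ω s false) ≠ χ (Function.update ω s true) := by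
      intro heq
      apply hωb
      have hself : χ ω = χ (Function.update ω s (ω s)) := by rw [Function.update_eq_self]
      cases b <;> cases hb : ω s <;> rw [hself, hb] <;> simp [heq]
    have hle : χ (Function.update ω s false) ≤ χ (Function.update ω s true) :=
      hmono (update_false_le_true ω s)
    refine ⟨ω, ?_⟩
    rcases h01 (Function.update ω s false) with h0 | h0 <;>
      rcases h01 (Function.update ω s true) with h1 | h1 <;>
      simp [h0, h1] at hne hle ⊢ <;> linarith
  obtain ⟨ω, hw0, hw1⟩ := hwit
  -- positive-weight representative
  set ρ : S → Bool := fun s' =>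
    if c s' false ≠ 0 ∧ c s' true ≠ 0 then ω s' else (if c s' true ≠ 0 then true else false)
    with hρ
  have hWρ : 0 < W c ρ := by
    refine Finset.prod_pos fun s' _ => ?_
    show 0 < c s' (if c s' false ≠ 0 ∧ c s' true ≠ 0 then ω s'
      else if c s' true ≠ 0 then true else false)
    by_cases hcs : c s' false ≠ 0 ∧ c s' true ≠ 0
    · rw [if_pos hcs]
      cases h : ω s'
      · exact lt_of_le_of_ne (hc0 s' false) (Ne.symm hcs.1)
      · exact lt_of_le_of_ne (hc0 s' true) (Ne.symm hcs.2)
    · rw [if_neg hcs]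
      by_cases hct : c s' true ≠ 0
      · rw [if_pos hct]
        exact lt_of_le_of_ne (hc0 s' true) (Ne.symm hct)
      · rw [if_neg hct]
        push_neg at hct
        have h1 : c s' false = 1 := by have := hc1 s'; linarith
        rw [h1]; norm_num
  set D : Finset S := Finset.univ.filter (fun s' => ¬ (c s' false ≠ 0 ∧ c s' true ≠ 0)) with hD
  have hbs : c s false ≠ 0 ∧ c s true ≠ 0 := by
    constructor
    · intro h; exact hs (hdet s (Or.inl h))
    · intro h; exact hs (hdet s (Or.inr h))
  have hsD : s ∉ D := by
    rw [hD]
    simp only [Finset.mem_filter, Finset.mem_univ, true_and, not_not]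
    exact hbs
  set Dχ : (S → Bool) → ℝ :=
    fun ω' => χ (Function.update ω' s true) - χ (Function.update ω' s false) with hDχ
  have hDρω : Dχ ρ = Dχ ω := by
    refine eq_of_notdep D ρ ω ?_ ?_
    · intro s' hs'
      rw [hρ]
      have : c s' false ≠ 0 ∧ c s' true ≠ 0 := by
        by_contra hcon
        exact hs' (by rw [hD]; simp only [Finset.mem_filter, Finset.mem_univ, true_and]; exact hcon)
      simp [this]
    · intro s' hs'
      have hs's : s' ≠ s := fun h => hsD (h ▸ hs')
      have hnd : NotDep χ s' := by
        rw [hD] at hs'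
        simp only [Finset.mem_filter, Finset.mem_univ, true_and] at hs'
        rcases not_and_or.mp hs' with h | h <;> push_neg at h <;> exact hdet s' (by tauto)
      intro ω' b
      show χ (Function.update (Function.update ω' s' b) s true)
          - χ (Function.update (Function.update ω' s' b) s false)
        = χ (Function.update ω' s true) - χ (Function.update ω' s false)
      rw [Function.update_comm hs's b true ω', Function.update_comm hs's b false ω',
        hnd (Function.update ω' s true) b, hnd (Function.update ω' s false) b]
  have hDρ : Dχ ρ = 1 := by
    rw [hDρω]
    show χ (Function.update ω s true) - χ (Function.update ω s false) = 1
    rw [hw0, hw1]; ring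
  have hnn : ∀ ω' : S → Bool, 0 ≤ W c ω' * Dχ ω' := by
    intro ω'
    refine mul_nonneg (W_nonneg hc0 ω') ?_
    show 0 ≤ χ (Function.update ω' s true) - χ (Function.update ω' s false)
    exact sub_nonneg.mpr (hmono (update_false_le_true ω' s))
  have hsingle : W c ρ * Dχ ρ ≤ EE c Dχ :=
    Finset.single_le_sum (fun ω' _ => hnn ω') (Finset.mem_univ ρ)
  rw [hDρ, mul_one] at hsingle
  exact lt_of_lt_of_le hWρ hsingle

lemma indep_essential_disjoint (hc0 : ∀ s b, 0 ≤ c s b)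
    (hc1 : ∀ s, c s false + c s true = 1)
    {χ ψ : (S → Bool) → ℝ} (hχm : Monotone χ) (hψm : Monotone ψ)
    (hχ01 : ∀ ω, χ ω = 0 ∨ χ ω = 1) (hψ01 : ∀ ω, ψ ω = 0 ∨ ψ ω = 1)
    (hχdet : ∀ s, (c s false = 0 ∨ c s true = 0) → NotDep χ s)
    (hψdet : ∀ s, (c s false = 0 ∨ c s true = 0) → NotDep ψ s)
    (hind : EE c (fun ω => χ ω * ψ ω) = EE c χ * EE c ψ)
    {s : S} (h1 : ¬ NotDep χ s) : NotDep ψ s := by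
  by_contra h2
  have hb : c s false ≠ 0 ∧ c s true ≠ 0 := by
    constructor <;> · intro h; exact h1 (hχdet s (by tauto))
  have hc0f : 0 < c s false := lt_of_le_of_ne (hc0 s false) (Ne.symm hb.1)
  have hc0t : 0 < c s true := lt_of_le_of_ne (hc0 s true) (Ne.symm hb.2)
  have H := harris_point hc0 hc1 s χ ψ hχm hψm
  have p1 := essential_pos hc0 hc1 hχm hχ01 hχdet h1
  have p2 := essential_pos hc0 hc1 hψm hψ01 hψdet h2
  rw [hind] at H
  nlinarith [mul_pos hc0f hc0t, mul_pos p1 p2]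

lemma main_step (hc0 : ∀ s b, 0 ≤ c s b) (hc1 : ∀ s, c s false + c s true = 1)
    (f g h : (S → Bool) → ℝ) (T : Finset S)
    (hf0 : ∀ ω, 0 ≤ f ω) (hfd : ∀ s, s ∉ T → NotDep f s)
    (hg : Antitone g) (hh : Antitone h) (hhd : ∀ s ∈ T, NotDep h s) :
    EE c (fun ω => f ω * g ω) * EE c h ≤ EE c (fun ω => f ω * (g ω * h ω)) := by
  classical
  set ω₀ : S → Bool := fun _ => false with hω₀
  set lT : List S := T.toList with hlT
  set lC : List S := Tᶜ.toList with hlC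
  have hcov : ∀ s' : S, s' ∈ lT ++ lC := by
    intro s'
    rw [List.mem_append, hlT, hlC, Finset.mem_toList, Finset.mem_toList, Finset.mem_compl]
    exact (em (s' ∈ T)).imp id id
  have hE : ∀ u : (S → Bool) → ℝ, EE c u = KL c lT (KL c lC u) ω₀ := by
    intro u
    rw [← KL_append]
    exact (KL_eq_EE hc1 (fun s' => Or.inl (hcov s')) ω₀).symm
  have hfC : ∀ s' ∈ lC, NotDep f s' := by
    intro s' hs'
    rw [hlC, Finset.mem_toList, Finset.mem_compl] at hs'
    exact hfd s' hs'
  have hhconst : ∀ ω, KL c lC h ω = EE c h := by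
    intro ω
    refine KL_eq_EE hc1 (fun s' => ?_) ω
    by_cases hs : s' ∈ T
    · exact Or.inr (hhd s' hs)
    · exact Or.inl (by rw [hlC, Finset.mem_toList, Finset.mem_compl]; exact hs)
  have key : ∀ ω : S → Bool,
      EE c h * (f ω * KL c lC g ω) ≤ f ω * KL c lC (fun ω => g ω * h ω) ω := by
    intro ω
    have h1 : KL c lC g ω * KL c lC h ω ≤ KL c lC (fun ω => g ω * h ω) ω :=
      KL_harris_anti hc0 hc1 hg hh ω
    rw [hhconst ω] at h1
    calc EE c h * (f ω * KL c lC g ω) = f ω * (KL c lC g ω * EE c h) := by ring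
      _ ≤ f ω * KL c lC (fun ω => g ω * h ω) ω :=
        mul_le_mul_of_nonneg_left h1 (hf0 ω)
  calc EE c (fun ω => f ω * g ω) * EE c h
      = EE c h * KL c lT (KL c lC (fun ω => f ω * g ω)) ω₀ := by rw [← hE]; ring
    _ = EE c h * KL c lT (fun ω => f ω * KL c lC g ω) ω₀ := by rw [KL_mul_left g hfC]
    _ = KL c lT (fun ω => EE c h * (f ω * KL c lC g ω)) ω₀ := by rw [KL_smul]
    _ ≤ KL c lT (fun ω => f ω * KL c lC (fun ω => g ω * h ω) ω) ω₀ :=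
        KL_mono_op hc0 key ω₀
    _ = KL c lT (KL c lC (fun ω => f ω * (g ω * h ω))) ω₀ := by
        rw [KL_mul_left (fun ω => g ω * h ω) hfC]
    _ = EE c (fun ω => f ω * (g ω * h ω)) := (hE _).symm

end Core

section Prob
variable {c : S → Bool → ℝ}

lemma per_index (hc0 : ∀ s b, 0 ≤ c s b) (hc1 : ∀ s, c s false + c s true = 1)
    {k : ℕ} (χ : Fin k → (S → Bool) → ℝ)
    (hmono : ∀ j, Monotone (χ j)) (h01 : ∀ j ω, χ j ω = 0 ∨ χ j ω = 1)
    (hdet : ∀ j s, (c s false = 0 ∨ c s true = 0) → NotDep (χ j) s)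
    (sim' : Fin k → Fin k → Prop) (hirr : ∀ i, ¬ sim' i i)
    (hind : ∀ i j, i ≠ j → ¬ sim' i j →
      EE c (fun ω => χ i ω * χ j ω) = EE c (χ i) * EE c (χ j))
    (i : Fin k) (lam : ℝ) (hlam : 0 ≤ lam) :
    (EE c (χ i) - lam * (EE c (χ i) + ∑ j ∈ Finset.univ.filter (fun j => sim' i j),
        EE c (fun ω => χ i ω * χ j ω)))
      * EE c (fun ω => Real.exp (-lam * ∑ j, χ j ω))
    ≤ EE c (fun ω => χ i ω * Real.exp (-lam * ∑ j, χ j ω)) := by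
  classical
  have hχ0 : ∀ j ω, 0 ≤ χ j ω := fun j ω => by rcases h01 j ω with h | h <;> rw [h] <;> norm_num
  have hχ1 : ∀ j ω, χ j ω ≤ 1 := fun j ω => by rcases h01 j ω with h | h <;> rw [h] <;> norm_num
  obtain ⟨Pi, hPi⟩ : ∃ x : ℝ, x = EE c (χ i) := ⟨_, rfl⟩
  obtain ⟨Δi, hΔi⟩ : ∃ x : ℝ, x = ∑ j ∈ Finset.univ.filter (fun j => sim' i j),
    EE c (fun ω => χ i ω * χ j ω) := ⟨_, rfl⟩
  rw [← hPi, ← hΔi]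
  set N : Finset (Fin k) := Finset.univ.filter (fun j => j = i ∨ sim' i j) with hN
  set Dd : Finset (Fin k) := Finset.univ.filter (fun j => ¬ (j = i ∨ sim' i j)) with hDd
  set Y : (S → Bool) → ℝ := fun ω => ∑ j ∈ N, χ j ω with hY
  set Z : (S → Bool) → ℝ := fun ω => ∑ j ∈ Dd, χ j ω with hZ
  have hYZ : ∀ ω, Y ω + Z ω = ∑ j, χ j ω := fun ω =>
    Finset.sum_filter_add_sum_filter_not Finset.univ _ _
  have hYmono : Monotone Y := fun ω ω' hle => Finset.sum_le_sum fun j _ => hmono j hle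
  have hZmono : Monotone Z := fun ω ω' hle => Finset.sum_le_sum fun j _ => hmono j hle
  have hY0 : ∀ ω, 0 ≤ Y ω := fun ω => Finset.sum_nonneg fun j _ => hχ0 j ω
  set g : (S → Bool) → ℝ := fun ω => Real.exp (-lam * Y ω) with hg
  set hfun : (S → Bool) → ℝ := fun ω => Real.exp (-lam * Z ω) with hh
  have hganti : Antitone g := fun ω ω' hle =>
    Real.exp_le_exp.mpr (by nlinarith [hYmono hle])
  have hhanti : Antitone hfun := fun ω ω' hle =>
    Real.exp_le_exp.mpr (by nlinarith [hZmono hle])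
  set T : Finset S := Finset.univ.filter (fun s => ¬ NotDep (χ i) s) with hT
  have hfd : ∀ s, s ∉ T → NotDep (χ i) s := by
    intro s hs
    rw [hT] at hs
    simpa using hs
  have hhd : ∀ s ∈ T, NotDep hfun s := by
    intro s hsT
    have hsi : ¬ NotDep (χ i) s := by rw [hT] at hsT; simpa using hsT
    have hz : NotDep Z s := by
      refine NotDep_sum Dd _ fun j hj => ?_
      rw [hDd] at hj
      simp only [Finset.mem_filter, Finset.mem_univ, true_and, not_or] at hj
      exact indep_essential_disjoint hc0 hc1 (hmono i) (hmono j) (h01 i) (h01 j)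
        (hdet i) (hdet j) (hind i j (fun hh' => hj.1 hh'.symm) hj.2) hsi
    exact NotDep_comp hz (fun x => Real.exp (-lam * x))
  have hms := main_step hc0 hc1 (χ i) g hfun T (fun ω => hχ0 i ω) hfd hganti hhanti hhd
  have hgh : ∀ ω, g ω * hfun ω = Real.exp (-lam * ∑ j, χ j ω) := by
    intro ω
    rw [hg, hh]
    show Real.exp (-lam * Y ω) * Real.exp (-lam * Z ω) = _
    rw [← Real.exp_add]
    congr 1
    rw [← hYZ ω]; ring
  have hms' : EE c (fun ω => χ i ω * g ω) * EE c hfun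
      ≤ EE c (fun ω => χ i ω * Real.exp (-lam * ∑ j, χ j ω)) := by
    refine le_trans hms (le_of_eq ?_)
    refine Finset.sum_congr rfl fun ω _ => ?_
    show W c ω * (χ i ω * (g ω * hfun ω))
        = W c ω * (χ i ω * Real.exp (-lam * ∑ j, χ j ω))
    rw [hgh ω]
  have hΨ0 : 0 ≤ EE c (fun ω => Real.exp (-lam * ∑ j, χ j ω)) :=
    EE_nonneg hc0 fun ω => (Real.exp_pos _).le
  have hb1 : EE c (fun ω => Real.exp (-lam * ∑ j, χ j ω)) ≤ EE c hfun := by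
    refine EE_mono hc0 fun ω => Real.exp_le_exp.mpr ?_
    have h1 := hY0 ω
    have h2 := hYZ ω
    nlinarith
  have hEχY : EE c (fun ω => χ i ω * Y ω) = Pi + Δi := by
    have e1 : (fun ω => χ i ω * Y ω) = fun ω => ∑ j ∈ N, χ i ω * χ j ω :=
      funext fun ω => by rw [hY]; exact Finset.mul_sum N _ _
    rw [e1, EE_sum]
    have hNins : N = insert i (Finset.univ.filter (fun j => sim' i j)) := by
      rw [hN]; ext j
      simp only [Finset.mem_filter, Finset.mem_univ, true_and, Finset.mem_insert]
    have hinotin : i ∉ Finset.univ.filter (fun j => sim' i j) := by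
      simp only [Finset.mem_filter, Finset.mem_univ, true_and]
      exact hirr i
    rw [hNins, Finset.sum_insert hinotin]
    have hself : EE c (fun ω => χ i ω * χ i ω) = Pi := by
      rw [hPi]
      refine Finset.sum_congr rfl fun ω _ => ?_
      show W c ω * (χ i ω * χ i ω) = W c ω * χ i ω
      rcases h01 i ω with h | h <;> rw [h] <;> ring
    rw [hself, hΔi]
  have hPige : (0:ℝ) ≤ Pi := by rw [hPi]; exact EE_nonneg hc0 (hχ0 i)
  rcases eq_or_lt_of_le hPige with hP0 | hPpos
  · have hΔ0 : Δi = 0 := by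
      rw [hΔi]
      refine Finset.sum_eq_zero fun j hj => ?_
      have hle : EE c (fun ω => χ i ω * χ j ω) ≤ Pi := by
        rw [hPi]
        exact EE_mono hc0 fun ω => mul_le_of_le_one_right (hχ0 i ω) (hχ1 j ω)
      have hge : (0:ℝ) ≤ EE c (fun ω => χ i ω * χ j ω) :=
        EE_nonneg hc0 fun ω => mul_nonneg (hχ0 i ω) (hχ0 j ω)
      linarith [hP0]
    have h0 : (Pi - lam * (Pi + Δi)) * EE c (fun ω => Real.exp (-lam * ∑ j, χ j ω)) = 0 := by
      rw [hΔ0, ← hP0]; ring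
    rw [h0]
    exact EE_nonneg hc0 fun ω => mul_nonneg (hχ0 i ω) (Real.exp_pos _).le
  · obtain ⟨m, hm⟩ : ∃ x : ℝ, x = (Pi + Δi) / Pi := ⟨_, rfl⟩
    have hmPi : m * Pi = Pi + Δi := by
      rw [hm]; exact div_mul_cancel₀ _ (ne_of_gt hPpos)
    obtain ⟨C, hC⟩ : ∃ x : ℝ, x = Real.exp (-lam * m) := ⟨_, rfl⟩
    have hCpos : (0:ℝ) < C := by rw [hC]; exact Real.exp_pos _
    have hJ : C * Pi ≤ EE c (fun ω => χ i ω * g ω) := by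
      have hpoint : ∀ ω, χ i ω * (C * (1 - lam * (Y ω - m))) ≤ χ i ω * g ω := by
        intro ω
        refine mul_le_mul_of_nonneg_left ?_ (hχ0 i ω)
        have he := Real.add_one_le_exp (-lam * (Y ω - m))
        have hgsplit : g ω = C * Real.exp (-lam * (Y ω - m)) := by
          rw [hg, hC]
          show Real.exp (-lam * Y ω) = _
          rw [← Real.exp_add]; congr 1; ring
        rw [hgsplit]
        nlinarith
      have hEmono := EE_mono hc0 hpoint
      have hcomp : EE c (fun ω => χ i ω * (C * (1 - lam * (Y ω - m)))) = C * Pi := by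
        have e : (fun ω => χ i ω * (C * (1 - lam * (Y ω - m))))
            = fun ω => (C * (1 + lam * m)) * χ i ω - (C * lam) * (χ i ω * Y ω) :=
          funext fun ω => by ring
        rw [e]
        rw [show (fun ω => (C * (1 + lam * m)) * χ i ω - (C * lam) * (χ i ω * Y ω))
            = fun ω => (fun ω => (C * (1 + lam * m)) * χ i ω) ω
              - (fun ω => (C * lam) * (χ i ω * Y ω)) ω from rfl, EE_sub, EE_smul, EE_smul,
          hEχY, ← hPi]
        linear_combination (C * lam) * hmPi
      linarith [hcomp ▸ hEmono]
    have hfinal : (C * Pi) * EE c (fun ω => Real.exp (-lam * ∑ j, χ j ω))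
        ≤ EE c (fun ω => χ i ω * Real.exp (-lam * ∑ j, χ j ω)) := by
      have hCP0 : (0:ℝ) ≤ C * Pi := mul_nonneg hCpos.le hPpos.le
      calc (C * Pi) * EE c (fun ω => Real.exp (-lam * ∑ j, χ j ω))
          ≤ EE c (fun ω => χ i ω * g ω) * EE c hfun :=
            mul_le_mul hJ hb1 hΨ0 (le_trans hCP0 hJ)
        _ ≤ _ := hms'
    have hCge : 1 - lam * m ≤ C := by
      have := Real.add_one_le_exp (-lam * m)
      rw [hC]; linarith
    have heq1 : Pi - lam * (Pi + Δi) = (1 - lam * m) * Pi := by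
      linear_combination lam * hmPi
    calc (Pi - lam * (Pi + Δi)) * EE c (fun ω => Real.exp (-lam * ∑ j, χ j ω))
        = ((1 - lam * m) * Pi) * EE c (fun ω => Real.exp (-lam * ∑ j, χ j ω)) := by
          rw [heq1]
      _ ≤ (C * Pi) * EE c (fun ω => Real.exp (-lam * ∑ j, χ j ω)) := by
          refine mul_le_mul_of_nonneg_right ?_ hΨ0
          exact mul_le_mul_of_nonneg_right hCge hPpos.le
      _ ≤ _ := hfinal

lemma deriv_ineq (hc0 : ∀ s b, 0 ≤ c s b) (hc1 : ∀ s, c s false + c s true = 1)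
    {k : ℕ} (χ : Fin k → (S → Bool) → ℝ)
    (hmono : ∀ j, Monotone (χ j)) (h01 : ∀ j ω, χ j ω = 0 ∨ χ j ω = 1)
    (hdet : ∀ j s, (c s false = 0 ∨ c s true = 0) → NotDep (χ j) s)
    (sim' : Fin k → Fin k → Prop) (hirr : ∀ i, ¬ sim' i i)
    (hind : ∀ i j, i ≠ j → ¬ sim' i j →
      EE c (fun ω => χ i ω * χ j ω) = EE c (χ i) * EE c (χ j))
    (μ Δ : ℝ) (hμ : μ = ∑ i, EE c (χ i))
    (hΔ : Δ = ∑ i, ∑ j ∈ Finset.univ.filter (fun j => sim' i j),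
      EE c (fun ω => χ i ω * χ j ω))
    (lam : ℝ) (hlam : 0 ≤ lam) :
    (μ - lam * (μ + Δ)) * EE c (fun ω => Real.exp (-lam * ∑ j, χ j ω))
      ≤ EE c (fun ω => (∑ j, χ j ω) * Real.exp (-lam * ∑ j, χ j ω)) := by
  classical
  have hsum := Finset.sum_le_sum
    (fun i (_ : i ∈ Finset.univ) => per_index hc0 hc1 χ hmono h01 hdet sim' hirr hind i lam hlam)
  calc (μ - lam * (μ + Δ)) * EE c (fun ω => Real.exp (-lam * ∑ j, χ j ω))
      = ∑ i, (EE c (χ i) - lam * (EE c (χ i) + ∑ j ∈ Finset.univ.filter (fun j => sim' i j),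
          EE c (fun ω => χ i ω * χ j ω)))
        * EE c (fun ω => Real.exp (-lam * ∑ j, χ j ω)) := by
        rw [← Finset.sum_mul]
        congr 1
        rw [hμ, hΔ, Finset.sum_sub_distrib, ← Finset.mul_sum, Finset.sum_add_distrib]
    _ ≤ ∑ i, EE c (fun ω => χ i ω * Real.exp (-lam * ∑ j, χ j ω)) := hsum
    _ = EE c (fun ω => (∑ j, χ j ω) * Real.exp (-lam * ∑ j, χ j ω)) := by
        rw [← EE_sum Finset.univ (fun i ω => χ i ω * Real.exp (-lam * ∑ j, χ j ω))]
        refine Finset.sum_congr rfl fun ω _ => ?_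
        show W c ω * (∑ i, χ i ω * Real.exp (-lam * ∑ j, χ j ω))
            = W c ω * ((∑ j, χ j ω) * Real.exp (-lam * ∑ j, χ j ω))
        rw [Finset.sum_mul]

end Prob

section Calc
variable {c : S → Bool → ℝ}

lemma mgf_bound (hc0 : ∀ s b, 0 ≤ c s b) (hc1 : ∀ s, c s false + c s true = 1)
    {k : ℕ} (χ : Fin k → (S → Bool) → ℝ)
    (hmono : ∀ j, Monotone (χ j)) (h01 : ∀ j ω, χ j ω = 0 ∨ χ j ω = 1)
    (hdet : ∀ j s, (c s false = 0 ∨ c s true = 0) → NotDep (χ j) s)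
    (sim' : Fin k → Fin k → Prop) (hirr : ∀ i, ¬ sim' i i)
    (hind : ∀ i j, i ≠ j → ¬ sim' i j →
      EE c (fun ω => χ i ω * χ j ω) = EE c (χ i) * EE c (χ j))
    (μ Δ : ℝ) (hμ : μ = ∑ i, EE c (χ i))
    (hΔ : Δ = ∑ i, ∑ j ∈ Finset.univ.filter (fun j => sim' i j),
      EE c (fun ω => χ i ω * χ j ω))
    (lam0 : ℝ) (hlam0 : 0 ≤ lam0) :
    EE c (fun ω => Real.exp (-lam0 * ∑ j, χ j ω))
      ≤ Real.exp (-lam0 * μ + lam0 ^ 2 * (μ + Δ) / 2) := by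
  classical
  set Ψ : ℝ → ℝ := fun lam => ∑ ω : S → Bool, W c ω * Real.exp (-lam * (∑ j, χ j ω)) with hΨ
  set u : ℝ → ℝ := fun lam => lam * μ - lam ^ 2 * ((μ + Δ) / 2) with hu
  set Φ : ℝ → ℝ := fun lam => Ψ lam * Real.exp (u lam) with hΦ
  have hΨd : ∀ lam : ℝ, HasDerivAt Ψ
      (∑ ω : S → Bool, W c ω * (Real.exp (-lam * (∑ j, χ j ω)) * (-1 * (∑ j, χ j ω)))) lam := by
    intro lam
    exact HasDerivAt.fun_sum fun ω _ =>
      (((hasDerivAt_id lam).neg.mul_const (∑ j, χ j ω)).exp).const_mul (W c ω)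
  have hΨnn : ∀ lam : ℝ, 0 ≤ Ψ lam := fun lam =>
    Finset.sum_nonneg fun ω _ => mul_nonneg (W_nonneg hc0 ω) (Real.exp_pos _).le
  have hD : ∀ lam : ℝ, 0 ≤ lam →
      (∑ ω : S → Bool, W c ω * (Real.exp (-lam * (∑ j, χ j ω)) * (-1 * (∑ j, χ j ω))))
        ≤ -((μ - lam * (μ + Δ)) * Ψ lam) := by
    intro lam hl
    have hk := deriv_ineq hc0 hc1 χ hmono h01 hdet sim' hirr hind μ Δ hμ hΔ lam hl
    rw [show EE c (fun ω => Real.exp (-lam * ∑ j, χ j ω)) = Ψ lam from rfl] at hk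
    have e1 : EE c (fun ω => (∑ j, χ j ω) * Real.exp (-lam * ∑ j, χ j ω))
        = -(∑ ω : S → Bool, W c ω * (Real.exp (-lam * (∑ j, χ j ω)) * (-1 * (∑ j, χ j ω)))) := by
      rw [← Finset.sum_neg_distrib]
      refine Finset.sum_congr rfl fun ω _ => ?_
      show W c ω * ((∑ j, χ j ω) * Real.exp (-lam * ∑ j, χ j ω)) = _
      ring
    rw [e1] at hk
    linarith
  have hud : ∀ lam : ℝ, HasDerivAt u (μ - lam * (μ + Δ)) lam := by
    intro lam
    have h1 := (hasDerivAt_id lam).mul_const μ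
    have h2 := (hasDerivAt_pow 2 lam).mul_const ((μ + Δ) / 2)
    have h3 := h1.sub h2
    refine h3.congr_deriv ?_
    push_cast
    ring
  have hΦd : ∀ lam : ℝ, HasDerivAt Φ
      ((∑ ω : S → Bool, W c ω * (Real.exp (-lam * (∑ j, χ j ω)) * (-1 * (∑ j, χ j ω))))
          * Real.exp (u lam)
        + Ψ lam * (Real.exp (u lam) * (μ - lam * (μ + Δ)))) lam := by
    intro lam
    exact (hΨd lam).mul ((hud lam).exp)
  have hΦdnp : ∀ lam : ℝ, 0 ≤ lam → deriv Φ lam ≤ 0 := by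
    intro lam hl
    rw [(hΦd lam).deriv]
    have h1 := hD lam hl
    have hexp := Real.exp_pos (u lam)
    have h2 : (∑ ω : S → Bool, W c ω * (Real.exp (-lam * (∑ j, χ j ω)) * (-1 * (∑ j, χ j ω))))
        + (μ - lam * (μ + Δ)) * Ψ lam ≤ 0 := by linarith
    have h3 := mul_le_mul_of_nonneg_right h2 hexp.le
    calc (∑ ω : S → Bool, W c ω * (Real.exp (-lam * (∑ j, χ j ω)) * (-1 * (∑ j, χ j ω))))
          * Real.exp (u lam)
        + Ψ lam * (Real.exp (u lam) * (μ - lam * (μ + Δ)))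
        = ((∑ ω : S → Bool, W c ω * (Real.exp (-lam * (∑ j, χ j ω)) * (-1 * (∑ j, χ j ω))))
            + (μ - lam * (μ + Δ)) * Ψ lam) * Real.exp (u lam) := by ring
      _ ≤ 0 := by simpa using h3
  have hdiff : Differentiable ℝ Φ := fun x => (hΦd x).differentiableAt
  have hanti : AntitoneOn Φ (Set.Ici 0) :=
    antitoneOn_of_deriv_nonpos (convex_Ici 0) hdiff.continuous.continuousOn
      (fun x _ => (hdiff x).differentiableWithinAt)
      (fun x hx => hΦdnp x (le_of_lt (by rwa [interior_Ici, Set.mem_Ioi] at hx)))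
  have hΦ0 : Φ 0 = 1 := by
    show Ψ 0 * Real.exp (u 0) = 1
    have h1 : Ψ 0 = 1 := by
      show (∑ ω : S → Bool, W c ω * Real.exp (-(0:ℝ) * (∑ j, χ j ω))) = 1
      have e : ∀ ω : S → Bool, W c ω * Real.exp (-(0:ℝ) * (∑ j, χ j ω)) = W c ω := by
        intro ω; norm_num
      rw [Finset.sum_congr rfl fun ω _ => e ω, W_sum hc1]
    have h2 : u 0 = 0 := by
      show (0:ℝ) * μ - 0 ^ 2 * ((μ + Δ) / 2) = 0
      ring
    rw [h1, h2, Real.exp_zero, one_mul]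
  have hle := hanti Set.self_mem_Ici (Set.mem_Ici.mpr hlam0) hlam0
  rw [hΦ0] at hle
  have hexp := Real.exp_pos (u lam0)
  have h5 : Ψ lam0 ≤ Real.exp (-(u lam0)) := by
    rw [Real.exp_neg, ← one_div]
    exact (le_div_iff₀ hexp).mpr hle
  calc EE c (fun ω => Real.exp (-lam0 * ∑ j, χ j ω)) = Ψ lam0 := rfl
    _ ≤ Real.exp (-(u lam0)) := h5
    _ = Real.exp (-lam0 * μ + lam0 ^ 2 * (μ + Δ) / 2) := by
        congr 1
        show -(lam0 * μ - lam0 ^ 2 * ((μ + Δ) / 2)) = _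
        ring

end Calc

end JansonAux

open JansonAux in
/-- The lower-tail Janson inequality `Pr(X ≤ μ − t) ≤ exp(−t²/(2(μ+Δ)))` for counts of
increasing events in a finite product probability space `{0,1}^S`. -/
theorem janson_lower_tail_increasing
    {S : Type*} [Fintype S] (μs : S → Measure Bool) [∀ s, IsProbabilityMeasure (μs s)]
    (k : ℕ) (A : Fin k → Set (S → Bool))
    (hAinc : ∀ i, ∀ ω ω' : S → Bool, (∀ s, ω s ≤ ω' s) → ω ∈ A i → ω' ∈ A i)
    (hAmeas : ∀ i, MeasurableSet (A i))
    (sim : Fin k → Fin k → Prop)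
    (hsim : ∀ i j, sim i j ↔ i ≠ j ∧
      Measure.pi μs (A i ∩ A j) ≠ Measure.pi μs (A i) * Measure.pi μs (A j))
    (X : (S → Bool) → ℝ)
    (hX : ∀ ω, X ω = ∑ i : Fin k, if ω ∈ A i then (1 : ℝ) else 0)
    (μ Δ : ℝ)
    (hμ : μ = ∑ i : Fin k, (Measure.pi μs (A i)).toReal)
    (hΔ : Δ = ∑ i : Fin k, ∑ j ∈ Finset.univ.filter (fun j => sim i j),
        (Measure.pi μs (A i ∩ A j)).toReal) :
    ∀ t : ℝ, 0 ≤ t → t ≤ μ →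
      (Measure.pi μs {ω | X ω ≤ μ - t}).toReal ≤ Real.exp (-(t ^ 2) / (2 * (μ + Δ))) := by
  classical
  intro t ht0 htμ
  set c : S → Bool → ℝ := fun s b => (μs s {b}).toReal with hcdef
  have hc0 : ∀ s b, 0 ≤ c s b := fun s b => ENNReal.toReal_nonneg
  have hfin : ∀ s (b : Bool), μs s {b} ≠ ⊤ := fun s b => measure_ne_top _ _
  have hc1 : ∀ s, c s false + c s true = 1 := by
    intro s
    have hu : ({false} : Set Bool) ∪ {true} = Set.univ := by
      ext b; cases b <;> simp
    have hd : Disjoint ({false} : Set Bool) {true} := by simp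
    have hadd := measure_union (μ := μs s) hd (measurableSet_singleton true)
    rw [hu, measure_univ] at hadd
    show (μs s {false}).toReal + (μs s {true}).toReal = 1
    rw [← ENNReal.toReal_add (hfin s false) (hfin s true), ← hadd, ENNReal.toReal_one]
  -- measure of sets as expectations
  have hsing_pi : ∀ ω : S → Bool, ({ω} : Set (S → Bool)) = Set.pi Set.univ (fun s => {ω s}) := by
    intro ω; ext ω'
    simp [Set.mem_pi, funext_iff]
  have hmeas_sing : ∀ ω : S → Bool, MeasurableSet ({ω} : Set (S → Bool)) := by
    intro ω
    rw [hsing_pi ω]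
    exact MeasurableSet.univ_pi fun s => measurableSet_singleton _
  have hsingle : ∀ ω : S → Bool, (Measure.pi μs {ω}).toReal = W c ω := by
    intro ω
    rw [hsing_pi ω, Measure.pi_pi, ENNReal.toReal_prod]
    rfl
  have hPE : ∀ B : Set (S → Bool), (Measure.pi μs B).toReal
      = EE c (fun ω => if ω ∈ B then (1:ℝ) else 0) := by
    intro B
    have hB : B = ⋃ ω ∈ (Finset.univ.filter (fun ω : S → Bool => ω ∈ B)), ({ω} : Set (S → Bool)) := by
      ext ω'; simp
    have hdisj : (↑(Finset.univ.filter (fun ω : S → Bool => ω ∈ B)) : Set (S → Bool)).PairwiseDisjoint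
        (fun ω => ({ω} : Set (S → Bool))) := by
      intro x _ y _ hxy
      simp [Set.disjoint_singleton, hxy]
    calc (Measure.pi μs B).toReal
        = (Measure.pi μs (⋃ ω ∈ (Finset.univ.filter (fun ω : S → Bool => ω ∈ B)),
            ({ω} : Set (S → Bool)))).toReal := by rw [← hB]
      _ = (∑ ω ∈ Finset.univ.filter (fun ω : S → Bool => ω ∈ B), Measure.pi μs {ω}).toReal := by
          rw [measure_biUnion_finset hdisj (fun ω _ => hmeas_sing ω)]
      _ = ∑ ω ∈ Finset.univ.filter (fun ω : S → Bool => ω ∈ B), (Measure.pi μs {ω}).toReal :=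
          ENNReal.toReal_sum (fun ω _ => measure_ne_top _ _)
      _ = ∑ ω ∈ Finset.univ.filter (fun ω : S → Bool => ω ∈ B), W c ω :=
          Finset.sum_congr rfl fun ω _ => hsingle ω
      _ = EE c (fun ω => if ω ∈ B then (1:ℝ) else 0) := by
          rw [Finset.sum_filter]
          refine Finset.sum_congr rfl fun ω _ => ?_
          by_cases h : ω ∈ B <;> simp [h]
  -- patched indicators
  set patch : (S → Bool) → (S → Bool) := fun ω s =>
    if c s false ≠ 0 ∧ c s true ≠ 0 then ω s else (if c s true ≠ 0 then true else false)
    with hpatchdef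
  set χ : Fin k → (S → Bool) → ℝ := fun j ω => if patch ω ∈ A j then (1:ℝ) else 0 with hχdef
  have hχval : ∀ j ω, χ j ω = if patch ω ∈ A j then (1:ℝ) else 0 := fun j ω => rfl
  have hpatchmono : ∀ ω ω' : S → Bool, ω ≤ ω' → patch ω ≤ patch ω' := by
    intro ω ω' hle s
    show (if c s false ≠ 0 ∧ c s true ≠ 0 then ω s else _)
        ≤ (if c s false ≠ 0 ∧ c s true ≠ 0 then ω' s else _)
    by_cases h : c s false ≠ 0 ∧ c s true ≠ 0
    · rw [if_pos h, if_pos h]; exact hle s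
    · rw [if_neg h, if_neg h]
  have h01 : ∀ j ω, χ j ω = 0 ∨ χ j ω = 1 := by
    intro j ω
    rw [hχval]
    by_cases h : patch ω ∈ A j
    · right; rw [if_pos h]
    · left; rw [if_neg h]
  have hmono : ∀ j, Monotone (χ j) := by
    intro j ω ω' hle
    rw [hχval, hχval]
    by_cases h : patch ω ∈ A j
    · have h2 : patch ω' ∈ A j :=
        hAinc j (patch ω) (patch ω') (fun s => hpatchmono ω ω' hle s) h
      rw [if_pos h, if_pos h2]
    · rw [if_neg h]
      by_cases h2 : patch ω' ∈ A j
      · rw [if_pos h2]; norm_num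
      · rw [if_neg h2]
  have hdet : ∀ j s, (c s false = 0 ∨ c s true = 0) → NotDep (χ j) s := by
    intro j s hcs ω b
    have hp : patch (Function.update ω s b) = patch ω := by
      funext s'
      show (if c s' false ≠ 0 ∧ c s' true ≠ 0 then Function.update ω s b s' else _)
          = (if c s' false ≠ 0 ∧ c s' true ≠ 0 then ω s' else _)
      by_cases hss : s' = s
      · subst hss
        have hno : ¬ (c s' false ≠ 0 ∧ c s' true ≠ 0) := by
          rcases hcs with h | h
          · exact fun hcon => hcon.1 h
          · exact fun hcon => hcon.2 h
        rw [if_neg hno, if_neg hno]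
      · rw [Function.update_of_ne hss]
    show (if patch (Function.update ω s b) ∈ A j then (1:ℝ) else 0) = _
    rw [hp]
  have hWpatch : ∀ ω : S → Bool, W c ω ≠ 0 → patch ω = ω := by
    intro ω hW
    funext s
    have hfac : c s (ω s) ≠ 0 := by
      intro h0
      exact hW (Finset.prod_eq_zero (Finset.mem_univ s) h0)
    show (if c s false ≠ 0 ∧ c s true ≠ 0 then ω s else (if c s true ≠ 0 then true else false)) = ω s
    by_cases hb : c s false ≠ 0 ∧ c s true ≠ 0
    · rw [if_pos hb]
    · rw [if_neg hb]
      rcases not_and_or.mp hb with h | h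
      · push_neg at h
        have hωs : ω s = true := by
          cases hos : ω s
          · rw [hos] at hfac; exact absurd h hfac
          · rfl
        have hct : c s true ≠ 0 := by rw [← hωs]; exact hfac
        rw [if_pos hct, hωs]
      · push_neg at h
        have hωs : ω s = false := by
          cases hos : ω s
          · rfl
          · rw [hos] at hfac; exact absurd h hfac
        rw [if_neg (not_not.mpr h), hωs]
  have hiA : ∀ j (ω : S → Bool), W c ω ≠ 0 → χ j ω = (if ω ∈ A j then (1:ℝ) else 0) := by
    intro j ω hW
    rw [hχval, hWpatch ω hW]
  have hPj : ∀ j, (Measure.pi μs (A j)).toReal = EE c (χ j) := by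
    intro j
    rw [hPE (A j)]
    exact EE_congr fun ω hW => (hiA j ω hW).symm
  have hPij : ∀ i j, (Measure.pi μs (A i ∩ A j)).toReal
      = EE c (fun ω => χ i ω * χ j ω) := by
    intro i j
    rw [hPE (A i ∩ A j)]
    refine EE_congr fun ω hW => ?_
    rw [hiA i ω hW, hiA j ω hW]
    by_cases h1 : ω ∈ A i <;> by_cases h2 : ω ∈ A j <;>
      simp [Set.mem_inter_iff, h1, h2]
  have hind : ∀ i j, i ≠ j → ¬ sim i j →
      EE c (fun ω => χ i ω * χ j ω) = EE c (χ i) * EE c (χ j) := by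
    intro i j hne hnsim
    have hmeq : Measure.pi μs (A i ∩ A j) = Measure.pi μs (A i) * Measure.pi μs (A j) := by
      by_contra hcon
      exact hnsim ((hsim i j).mpr ⟨hne, hcon⟩)
    rw [← hPij, ← hPj, ← hPj, hmeq, ENNReal.toReal_mul]
  have hirr : ∀ i, ¬ sim i i := fun i hsi => ((hsim i i).mp hsi).1 rfl
  have hμ' : μ = ∑ i, EE c (χ i) := by
    rw [hμ]; exact Finset.sum_congr rfl fun i _ => hPj i
  have hΔ' : Δ = ∑ i, ∑ j ∈ Finset.univ.filter (fun j => sim i j),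
      EE c (fun ω => χ i ω * χ j ω) := by
    rw [hΔ]
    exact Finset.sum_congr rfl fun i _ => Finset.sum_congr rfl fun j _ => hPij i j
  have hχ0 : ∀ j ω, 0 ≤ χ j ω := fun j ω => by
    rcases h01 j ω with h | h <;> rw [h] <;> norm_num
  have hμ0 : 0 ≤ μ := by
    rw [hμ']
    exact Finset.sum_nonneg fun i _ => EE_nonneg hc0 (hχ0 i)
  have hΔ0 : 0 ≤ Δ := by
    rw [hΔ']
    exact Finset.sum_nonneg fun i _ => Finset.sum_nonneg fun j _ =>
      EE_nonneg hc0 fun ω => mul_nonneg (hχ0 i ω) (hχ0 j ω)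
  by_cases hMD : μ + Δ = 0
  · have htz : t = 0 := le_antisymm (by linarith) ht0
    have he1 : Real.exp (-(t ^ 2) / (2 * (μ + Δ))) = 1 := by
      rw [htz, hMD]; norm_num
    rw [he1]
    calc (Measure.pi μs {ω | X ω ≤ μ - t}).toReal
        ≤ (Measure.pi μs Set.univ).toReal := by
          refine ENNReal.toReal_mono (measure_ne_top _ _) (measure_mono (Set.subset_univ _))
      _ = 1 := by rw [measure_univ, ENNReal.toReal_one]
  · have hMDpos : 0 < μ + Δ := lt_of_le_of_ne (by linarith) (Ne.symm hMD)
    set lam0 : ℝ := t / (μ + Δ) with hlam0def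
    have hlam0 : 0 ≤ lam0 := div_nonneg ht0 hMDpos.le
    have hmgf := mgf_bound hc0 hc1 χ hmono h01 hdet sim hirr hind μ Δ hμ' hΔ' lam0 hlam0
    have hXω : ∀ ω : S → Bool, W c ω ≠ 0 → X ω = ∑ j, χ j ω := by
      intro ω hW
      rw [hX ω]
      exact Finset.sum_congr rfl fun j _ => (hiA j ω hW).symm
    have hmark : (Measure.pi μs {ω | X ω ≤ μ - t}).toReal
        ≤ Real.exp (lam0 * (μ - t)) * EE c (fun ω => Real.exp (-lam0 * ∑ j, χ j ω)) := by
      rw [hPE {ω | X ω ≤ μ - t}]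
      have e1 : EE c (fun ω => if ω ∈ {ω | X ω ≤ μ - t} then (1:ℝ) else 0)
          = EE c (fun ω => if (∑ j, χ j ω) ≤ μ - t then (1:ℝ) else 0) := by
        refine EE_congr fun ω hW => ?_
        simp only [Set.mem_setOf_eq, hXω ω hW]
      rw [e1, ← EE_smul]
      refine EE_mono hc0 fun ω => ?_
      by_cases h : (∑ j, χ j ω) ≤ μ - t
      · rw [if_pos h]
        have harg : 0 ≤ lam0 * (μ - t) + (-lam0 * ∑ j, χ j ω) := by
          have := mul_le_mul_of_nonneg_left h hlam0
          nlinarith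
        calc (1:ℝ) = Real.exp 0 := (Real.exp_zero).symm
          _ ≤ Real.exp (lam0 * (μ - t) + (-lam0 * ∑ j, χ j ω)) := Real.exp_le_exp.mpr harg
          _ = Real.exp (lam0 * (μ - t)) * Real.exp (-lam0 * ∑ j, χ j ω) := Real.exp_add _ _
      · rw [if_neg h]
        exact mul_nonneg (Real.exp_pos _).le (Real.exp_pos _).le
    calc (Measure.pi μs {ω | X ω ≤ μ - t}).toReal
        ≤ Real.exp (lam0 * (μ - t)) * EE c (fun ω => Real.exp (-lam0 * ∑ j, χ j ω)) := hmark
      _ ≤ Real.exp (lam0 * (μ - t)) * Real.exp (-lam0 * μ + lam0 ^ 2 * (μ + Δ) / 2) :=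
          mul_le_mul_of_nonneg_left hmgf (Real.exp_pos _).le
      _ = Real.exp (lam0 * (μ - t) + (-lam0 * μ + lam0 ^ 2 * (μ + Δ) / 2)) :=
          (Real.exp_add _ _).symm
      _ = Real.exp (-(t ^ 2) / (2 * (μ + Δ))) := by
          congr 1
          rw [hlam0def]
          field_simp
          ring
end

section
/- Let A_1, ..., A_k be events in a family I closed under intersections and unions in which any two events are positively correlated. Fix i, let Y_i = 1_{A_i} + Σ_{j~i} 1_{A_j} and Z_i = Σ_{j≠i, j≁i} 1_{A_j}, and X = Y_i + Z_i. Then for every s ≥ 0, E[1_{A_i} e^{−sX}] ≥ E[1_{A_i} e^{−sY_i}] · E[e^{−sX}]. -/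
open MeasureTheory Finset Real
open scoped Classical

namespace JansonAux

set_option linter.unusedSectionVars false

variable {Ω : Type*} [MeasurableSpace Ω]

noncomputable def ind (B : Set Ω) (ω : Ω) : ℝ := if ω ∈ B then 1 else 0

lemma ind_nonneg (B : Set Ω) (ω : Ω) : 0 ≤ ind B ω := by
  unfold ind; split <;> norm_num

lemma ind_le_one (B : Set Ω) (ω : Ω) : ind B ω ≤ 1 := by
  unfold ind; split <;> norm_num

lemma ind_of_mem {B : Set Ω} {ω : Ω} (h : ω ∈ B) : ind B ω = 1 := if_pos h

lemma ind_of_not_mem {B : Set Ω} {ω : Ω} (h : ω ∉ B) : ind B ω = 0 := if_neg h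

lemma ind_mul (B C : Set Ω) (ω : Ω) : ind B ω * ind C ω = ind (B ∩ C) ω := by
  unfold ind
  by_cases hB : ω ∈ B <;> by_cases hC : ω ∈ C <;> simp [hB, hC, Set.mem_inter_iff]

lemma measurable_ind {B : Set Ω} (hB : MeasurableSet B) : Measurable (ind B) := by
  unfold ind; exact Measurable.ite hB measurable_const measurable_const

lemma ind_eq_indicator (B : Set Ω) : ind B = B.indicator (fun _ => (1 : ℝ)) := by
  funext ω; by_cases h : ω ∈ B <;> simp [ind, h]

lemma integrable_ind (P : Measure Ω) [IsFiniteMeasure P] {B : Set Ω} (hB : MeasurableSet B) :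
    Integrable (ind B) P := by
  rw [ind_eq_indicator]
  exact (integrable_const (1 : ℝ)).indicator hB

lemma integral_ind (P : Measure Ω) [IsFiniteMeasure P] {B : Set Ω} (hB : MeasurableSet B) :
    ∫ ω, ind B ω ∂P = (P B).toReal := by
  have h := integral_indicator_one (μ := P) hB
  rw [ind_eq_indicator]
  exact h

lemma factor_nonneg {c : ℝ} (hc0 : 0 ≤ c) (hc1 : c ≤ 1) (B : Set Ω) (ω : Ω) :
    0 ≤ 1 - c * ind B ω := by
  have h1 : c * ind B ω ≤ c * 1 := mul_le_mul_of_nonneg_left (ind_le_one B ω) hc0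
  linarith

lemma listprod_nonneg {c : ℝ} (hc0 : 0 ≤ c) (hc1 : c ≤ 1) (L : List (Set Ω)) (ω : Ω) :
    0 ≤ (L.map (fun B => 1 - c * ind B ω)).prod := by
  apply List.prod_nonneg
  intro x hx
  rcases List.mem_map.1 hx with ⟨B, _, rfl⟩
  exact factor_nonneg hc0 hc1 B ω

@[simp] lemma atLeast_zero' : True := trivial

/-- `atLeast L t` : the set of points belonging to at least `t` of the sets in `L`. -/
def atLeast : List (Set Ω) → ℕ → Set Ω
  | _, 0 => Set.univ
  | [], _ + 1 => ∅
  | B :: L, t + 1 => atLeast L (t + 1) ∪ (B ∩ atLeast L t)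

@[simp] lemma atLeast_zero (L : List (Set Ω)) : atLeast L 0 = Set.univ := by
  cases L <;> rfl

lemma atLeast_succ_subset (L : List (Set Ω)) (t : ℕ) : atLeast L (t + 1) ⊆ atLeast L t := by
  induction L generalizing t with
  | nil => simp [atLeast]
  | cons B L ih =>
    cases t with
    | zero => simp [atLeast]
    | succ t =>
      show atLeast L (t + 2) ∪ (B ∩ atLeast L (t + 1)) ⊆ atLeast L (t + 1) ∪ (B ∩ atLeast L t)
      exact Set.union_subset_union (ih (t + 1)) (Set.inter_subset_inter_right _ (ih t))

lemma atLeast_eq_empty {L : List (Set Ω)} : ∀ {t : ℕ}, L.length < t → atLeast L t = ∅ := by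
  induction L with
  | nil =>
    intro t ht
    match t, ht with
    | t + 1, _ => rfl
  | cons B L ih =>
    intro t ht
    match t, ht with
    | t + 1, ht =>
      show atLeast L (t + 1) ∪ (B ∩ atLeast L t) = ∅
      have h1 : atLeast L (t + 1) = ∅ := ih (by simp at ht; omega)
      have h2 : atLeast L t = ∅ := ih (by simp at ht; omega)
      simp [h1, h2]

lemma atLeast_mem {Q : Set Ω → Prop}
    (hU : ∀ B C, Q B → Q C → Q (B ∪ C)) (hI : ∀ B C, Q B → Q C → Q (B ∩ C))
    {L : List (Set Ω)} (hL : ∀ B ∈ L, Q B) :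
    ∀ t, t < L.length → Q (atLeast L (t + 1)) := by
  induction L with
  | nil => simp
  | cons B L ih =>
    intro t ht
    have hB : Q B := hL B (by simp)
    have hL' : ∀ C ∈ L, Q C := fun C hC => hL C (by simp [hC])
    cases t with
    | zero =>
      show Q (atLeast L 1 ∪ (B ∩ atLeast L 0))
      rw [atLeast_zero, Set.inter_univ]
      rcases Nat.eq_zero_or_pos L.length with h0 | hpos
      · rw [atLeast_eq_empty (by omega), Set.empty_union]; exact hB
      · exact hU _ _ (ih hL' 0 hpos) hB
    | succ t =>
      show Q (atLeast L (t + 2) ∪ (B ∩ atLeast L (t + 1)))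
      have ht' : t < L.length := by simp at ht; omega
      have h2 := ih hL' t ht'
      by_cases hlen : t + 1 < L.length
      · exact hU _ _ (ih hL' (t + 1) hlen) (hI _ _ hB h2)
      · rw [atLeast_eq_empty (by omega), Set.empty_union]
        exact hI _ _ hB h2

lemma prod_decomp (c : ℝ) (L : List (Set Ω)) (ω : Ω) :
    (L.map (fun B => 1 - c * ind B ω)).prod
      = 1 - ∑ t ∈ Finset.range L.length, c * (1 - c) ^ t * ind (atLeast L (t + 1)) ω := by
  induction L with
  | nil => simp
  | cons B L ih =>
    rw [List.map_cons, List.prod_cons, ih, List.length_cons]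
    by_cases hB : ω ∈ B
    · have hBind : ind B ω = 1 := if_pos hB
      have key : ∀ t, ind (atLeast (B :: L) (t + 1)) ω = ind (atLeast L t) ω := by
        intro t
        show ind (atLeast L (t + 1) ∪ (B ∩ atLeast L t)) ω = _
        by_cases h : ω ∈ atLeast L t
        · rw [ind_of_mem (Set.mem_union_right _ (Set.mem_inter hB h)), ind_of_mem h]
        · have h' : ω ∉ atLeast L (t + 1) := fun hh => h (atLeast_succ_subset L t hh)
          rw [ind_of_not_mem (by simp [Set.mem_union, h, h']), ind_of_not_mem h]
      rw [Finset.sum_range_succ' (fun t => c * (1 - c) ^ t * ind (atLeast (B :: L) (t + 1)) ω)]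
      simp only [key, pow_zero]
      rw [show ind (atLeast L 0) ω = 1 by rw [atLeast_zero]; exact ind_of_mem (Set.mem_univ ω)]
      have : ∀ t ∈ Finset.range L.length,
          c * (1 - c) ^ (t + 1) * ind (atLeast L (t + 1)) ω
            = (1 - c) * (c * (1 - c) ^ t * ind (atLeast L (t + 1)) ω) := by
        intro t _; ring
      rw [Finset.sum_congr rfl this, ← Finset.mul_sum, hBind]
      ring
    · have hBind : ind B ω = 0 := if_neg hB
      have key : ∀ t, ind (atLeast (B :: L) (t + 1)) ω = ind (atLeast L (t + 1)) ω := by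
        intro t
        show ind (atLeast L (t + 1) ∪ (B ∩ atLeast L t)) ω = _
        by_cases h : ω ∈ atLeast L (t + 1)
        · rw [ind_of_mem (Set.mem_union_left _ h), ind_of_mem h]
        · rw [ind_of_not_mem (by simp [Set.mem_union, h, hB]), ind_of_not_mem h]
      rw [Finset.sum_range_succ]
      simp only [key]
      rw [atLeast_eq_empty (by omega)]
      rw [ind_of_not_mem (Set.notMem_empty ω)]
      rw [hBind]
      ring


lemma indep_squeeze (P : Measure Ω) [IsProbabilityMeasure P]
    (I : Set (Set Ω))
    (hcorr : ∀ A ∈ I, ∀ B ∈ I, P (A ∩ B) ≥ P A * P B)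
    (hinter : ∀ A ∈ I, ∀ B ∈ I, A ∩ B ∈ I)
    (hunion : ∀ A ∈ I, ∀ B ∈ I, A ∪ B ∈ I)
    (Ai : Set Ω) (hAiI : Ai ∈ I) (hAim : MeasurableSet Ai)
    {B C : Set Ω}
    (hB : B ∈ I ∧ MeasurableSet B ∧ P (Ai ∩ B) = P Ai * P B)
    (hC : C ∈ I ∧ MeasurableSet C ∧ P (Ai ∩ C) = P Ai * P C) :
    P (Ai ∩ (B ∪ C)) = P Ai * P (B ∪ C) ∧ P (Ai ∩ (B ∩ C)) = P Ai * P (B ∩ C) := by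
  obtain ⟨hBI, hBm, hBe⟩ := hB
  obtain ⟨hCI, hCm, hCe⟩ := hC
  have h1 : P Ai * P (B ∪ C) ≤ P (Ai ∩ (B ∪ C)) := hcorr _ hAiI _ (hunion _ hBI _ hCI)
  have h2 : P Ai * P (B ∩ C) ≤ P (Ai ∩ (B ∩ C)) := hcorr _ hAiI _ (hinter _ hBI _ hCI)
  have hsum : P (Ai ∩ (B ∪ C)) + P (Ai ∩ (B ∩ C)) = P Ai * P (B ∪ C) + P Ai * P (B ∩ C) := by
    have e1 : Ai ∩ (B ∪ C) = (Ai ∩ B) ∪ (Ai ∩ C) := Set.inter_union_distrib_left ..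
    have e2 : Ai ∩ (B ∩ C) = (Ai ∩ B) ∩ (Ai ∩ C) := by
      ext ω; simp only [Set.mem_inter_iff]; tauto
    rw [e1, e2, measure_union_add_inter (Ai ∩ B) (hAim.inter hCm), hBe, hCe, ← mul_add,
      ← measure_union_add_inter B hCm, mul_add]
  have hbtop : P Ai * P (B ∩ C) ≠ ⊤ := ENNReal.mul_ne_top (measure_ne_top P _) (measure_ne_top P _)
  have ha : P (Ai ∩ (B ∪ C)) = P Ai * P (B ∪ C) := by
    refine le_antisymm ?_ h1
    have : P (Ai ∩ (B ∪ C)) + P Ai * P (B ∩ C) ≤ P Ai * P (B ∪ C) + P Ai * P (B ∩ C) := by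
      calc P (Ai ∩ (B ∪ C)) + P Ai * P (B ∩ C)
          ≤ P (Ai ∩ (B ∪ C)) + P (Ai ∩ (B ∩ C)) := add_le_add_right h2 _
        _ = _ := hsum
    exact (ENNReal.add_le_add_iff_right hbtop).mp this
  refine ⟨ha, ?_⟩
  have hatop : P (Ai ∩ (B ∪ C)) ≠ ⊤ := measure_ne_top P _
  rw [ha] at hsum
  exact (ENNReal.add_right_inj (by rw [← ha]; exact hatop)).mp hsum


lemma main_ineq (P : Measure Ω) [IsProbabilityMeasure P]
    (I : Set (Set Ω))
    (hcorr : ∀ A ∈ I, ∀ B ∈ I, P (A ∩ B) ≥ P A * P B)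
    (hinter : ∀ A ∈ I, ∀ B ∈ I, A ∩ B ∈ I)
    (hunion : ∀ A ∈ I, ∀ B ∈ I, A ∪ B ∈ I)
    (Ai : Set Ω) (hAiI : Ai ∈ I) (hAim : MeasurableSet Ai)
    (LT LU : List (Set Ω))
    (hLT : ∀ B ∈ LT, B ∈ I ∧ MeasurableSet B)
    (hLU : ∀ B ∈ LU, B ∈ I ∧ MeasurableSet B ∧ P (Ai ∩ B) = P Ai * P B)
    (c : ℝ) (hc0 : 0 ≤ c) (hc1 : c ≤ 1) :
    (∫ ω, ind Ai ω * (LT.map (fun B => 1 - c * ind B ω)).prod ∂P)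
      * (∫ ω, (LU.map (fun B => 1 - c * ind B ω)).prod ∂P)
    ≤ ∫ ω, ind Ai ω * ((LT.map (fun B => 1 - c * ind B ω)).prod
        * (LU.map (fun B => 1 - c * ind B ω)).prod) ∂P := by
  have hc1' : (0:ℝ) ≤ 1 - c := by linarith
  have hd : ∀ t : ℕ, 0 ≤ c * (1 - c) ^ t := fun t => mul_nonneg hc0 (pow_nonneg hc1' t)
  have hCT : ∀ t < LT.length, atLeast LT (t + 1) ∈ I ∧ MeasurableSet (atLeast LT (t + 1)) :=
    atLeast_mem
      (fun B C hB hC => ⟨hunion _ hB.1 _ hC.1, hB.2.union hC.2⟩)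
      (fun B C hB hC => ⟨hinter _ hB.1 _ hC.1, hB.2.inter hC.2⟩) hLT
  have hBU : ∀ u < LU.length, atLeast LU (u + 1) ∈ I ∧ MeasurableSet (atLeast LU (u + 1))
      ∧ P (Ai ∩ atLeast LU (u + 1)) = P Ai * P (atLeast LU (u + 1)) :=
    atLeast_mem
      (fun B C hB hC => ⟨hunion _ hB.1 _ hC.1, hB.2.1.union hC.2.1,
        (indep_squeeze P I hcorr hinter hunion Ai hAiI hAim hB hC).1⟩)
      (fun B C hB hC => ⟨hinter _ hB.1 _ hC.1, hB.2.1.inter hC.2.1,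
        (indep_squeeze P I hcorr hinter hunion Ai hAiI hAim hB hC).2⟩) hLU
  -- measurability shorthands
  have hmC : ∀ t ∈ Finset.range LT.length, MeasurableSet (Ai ∩ atLeast LT (t + 1)) :=
    fun t ht => hAim.inter (hCT t (Finset.mem_range.1 ht)).2
  have hmB : ∀ u ∈ Finset.range LU.length, MeasurableSet (atLeast LU (u + 1)) :=
    fun u hu => (hBU u (Finset.mem_range.1 hu)).2.1
  have hmAB : ∀ u ∈ Finset.range LU.length, MeasurableSet (Ai ∩ atLeast LU (u + 1)) :=
    fun u hu => hAim.inter (hmB u hu)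
  have hmCB : ∀ t ∈ Finset.range LT.length, ∀ u ∈ Finset.range LU.length,
      MeasurableSet (Ai ∩ atLeast LT (t + 1) ∩ atLeast LU (u + 1)) :=
    fun t ht u hu => (hmC t ht).inter (hmB u hu)
  -- pointwise identities
  have hFT : ∀ ω, ind Ai ω * (LT.map (fun B => 1 - c * ind B ω)).prod
      = ind Ai ω - ∑ t ∈ Finset.range LT.length,
          c * (1 - c) ^ t * ind (Ai ∩ atLeast LT (t + 1)) ω := by
    intro ω
    rw [prod_decomp, mul_sub, mul_one, Finset.mul_sum]
    congr 1
    refine Finset.sum_congr rfl fun t _ => ?_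
    rw [show ind Ai ω * (c * (1 - c) ^ t * ind (atLeast LT (t + 1)) ω)
        = c * (1 - c) ^ t * (ind Ai ω * ind (atLeast LT (t + 1)) ω) from by ring, ind_mul]
  have hFU : ∀ ω, (LU.map (fun B => 1 - c * ind B ω)).prod
      = 1 - ∑ u ∈ Finset.range LU.length,
          c * (1 - c) ^ u * ind (atLeast LU (u + 1)) ω := fun ω => prod_decomp c LU ω
  have hLHSpt : ∀ ω, ind Ai ω * ((LT.map (fun B => 1 - c * ind B ω)).prod
        * (LU.map (fun B => 1 - c * ind B ω)).prod)
      = ind Ai ω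
        - (∑ t ∈ Finset.range LT.length, c * (1 - c) ^ t * ind (Ai ∩ atLeast LT (t + 1)) ω)
        - (∑ u ∈ Finset.range LU.length, c * (1 - c) ^ u * ind (Ai ∩ atLeast LU (u + 1)) ω)
        + ∑ t ∈ Finset.range LT.length, ∑ u ∈ Finset.range LU.length,
            (c * (1 - c) ^ t) * (c * (1 - c) ^ u)
              * ind (Ai ∩ atLeast LT (t + 1) ∩ atLeast LU (u + 1)) ω := by
    intro ω
    rw [← mul_assoc, hFT ω, hFU ω]
    have e1 : ind Ai ω * ∑ u ∈ Finset.range LU.length,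
        c * (1 - c) ^ u * ind (atLeast LU (u + 1)) ω
        = ∑ u ∈ Finset.range LU.length,
            c * (1 - c) ^ u * ind (Ai ∩ atLeast LU (u + 1)) ω := by
      rw [Finset.mul_sum]
      refine Finset.sum_congr rfl fun u _ => ?_
      rw [show ind Ai ω * (c * (1 - c) ^ u * ind (atLeast LU (u + 1)) ω)
          = c * (1 - c) ^ u * (ind Ai ω * ind (atLeast LU (u + 1)) ω) from by ring, ind_mul]
    have e2 : (∑ t ∈ Finset.range LT.length,
          c * (1 - c) ^ t * ind (Ai ∩ atLeast LT (t + 1)) ω)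
        * ∑ u ∈ Finset.range LU.length, c * (1 - c) ^ u * ind (atLeast LU (u + 1)) ω
        = ∑ t ∈ Finset.range LT.length, ∑ u ∈ Finset.range LU.length,
            (c * (1 - c) ^ t) * (c * (1 - c) ^ u)
              * ind (Ai ∩ atLeast LT (t + 1) ∩ atLeast LU (u + 1)) ω := by
      rw [Finset.sum_mul_sum]
      refine Finset.sum_congr rfl fun t _ => Finset.sum_congr rfl fun u _ => ?_
      rw [show (c * (1 - c) ^ t * ind (Ai ∩ atLeast LT (t + 1)) ω)
            * (c * (1 - c) ^ u * ind (atLeast LU (u + 1)) ω)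
          = (c * (1 - c) ^ t) * (c * (1 - c) ^ u)
              * (ind (Ai ∩ atLeast LT (t + 1)) ω * ind (atLeast LU (u + 1)) ω) from by ring,
        ind_mul]
    calc (ind Ai ω - ∑ t ∈ Finset.range LT.length,
            c * (1 - c) ^ t * ind (Ai ∩ atLeast LT (t + 1)) ω)
          * (1 - ∑ u ∈ Finset.range LU.length,
              c * (1 - c) ^ u * ind (atLeast LU (u + 1)) ω)
        = ind Ai ω
          - (∑ t ∈ Finset.range LT.length,
              c * (1 - c) ^ t * ind (Ai ∩ atLeast LT (t + 1)) ω)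
          - ind Ai ω * ∑ u ∈ Finset.range LU.length,
              c * (1 - c) ^ u * ind (atLeast LU (u + 1)) ω
          + (∑ t ∈ Finset.range LT.length,
              c * (1 - c) ^ t * ind (Ai ∩ atLeast LT (t + 1)) ω)
            * ∑ u ∈ Finset.range LU.length,
                c * (1 - c) ^ u * ind (atLeast LU (u + 1)) ω := by ring
      _ = _ := by rw [e1, e2]
  -- integrability
  have intST : Integrable (fun ω => ∑ t ∈ Finset.range LT.length,
      c * (1 - c) ^ t * ind (Ai ∩ atLeast LT (t + 1)) ω) P :=
    integrable_finset_sum _ fun t ht => (integrable_ind P (hmC t ht)).const_mul _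
  have intSU : Integrable (fun ω => ∑ u ∈ Finset.range LU.length,
      c * (1 - c) ^ u * ind (atLeast LU (u + 1)) ω) P :=
    integrable_finset_sum _ fun u hu => (integrable_ind P (hmB u hu)).const_mul _
  have intSAB : Integrable (fun ω => ∑ u ∈ Finset.range LU.length,
      c * (1 - c) ^ u * ind (Ai ∩ atLeast LU (u + 1)) ω) P :=
    integrable_finset_sum _ fun u hu => (integrable_ind P (hmAB u hu)).const_mul _
  have intSS : Integrable (fun ω => ∑ t ∈ Finset.range LT.length,
      ∑ u ∈ Finset.range LU.length, (c * (1 - c) ^ t) * (c * (1 - c) ^ u)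
        * ind (Ai ∩ atLeast LT (t + 1) ∩ atLeast LU (u + 1)) ω) P :=
    integrable_finset_sum _ fun t ht => integrable_finset_sum _ fun u hu =>
      (integrable_ind P (hmCB t ht u hu)).const_mul _
  -- integral values
  have iST : ∫ ω, (∑ t ∈ Finset.range LT.length,
        c * (1 - c) ^ t * ind (Ai ∩ atLeast LT (t + 1)) ω) ∂P
      = ∑ t ∈ Finset.range LT.length,
          c * (1 - c) ^ t * (P (Ai ∩ atLeast LT (t + 1))).toReal := by
    rw [integral_finset_sum _ fun t ht => (integrable_ind P (hmC t ht)).const_mul _]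
    exact Finset.sum_congr rfl fun t ht => by
      rw [integral_const_mul, integral_ind P (hmC t ht)]
  have iSU : ∫ ω, (∑ u ∈ Finset.range LU.length,
        c * (1 - c) ^ u * ind (atLeast LU (u + 1)) ω) ∂P
      = ∑ u ∈ Finset.range LU.length,
          c * (1 - c) ^ u * (P (atLeast LU (u + 1))).toReal := by
    rw [integral_finset_sum _ fun u hu => (integrable_ind P (hmB u hu)).const_mul _]
    exact Finset.sum_congr rfl fun u hu => by
      rw [integral_const_mul, integral_ind P (hmB u hu)]
  have iSAB : ∫ ω, (∑ u ∈ Finset.range LU.length,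
        c * (1 - c) ^ u * ind (Ai ∩ atLeast LU (u + 1)) ω) ∂P
      = ∑ u ∈ Finset.range LU.length,
          c * (1 - c) ^ u * (P (Ai ∩ atLeast LU (u + 1))).toReal := by
    rw [integral_finset_sum _ fun u hu => (integrable_ind P (hmAB u hu)).const_mul _]
    exact Finset.sum_congr rfl fun u hu => by
      rw [integral_const_mul, integral_ind P (hmAB u hu)]
  have iSS : ∫ ω, (∑ t ∈ Finset.range LT.length, ∑ u ∈ Finset.range LU.length,
        (c * (1 - c) ^ t) * (c * (1 - c) ^ u)
          * ind (Ai ∩ atLeast LT (t + 1) ∩ atLeast LU (u + 1)) ω) ∂P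
      = ∑ t ∈ Finset.range LT.length, ∑ u ∈ Finset.range LU.length,
          (c * (1 - c) ^ t) * (c * (1 - c) ^ u)
            * (P (Ai ∩ atLeast LT (t + 1) ∩ atLeast LU (u + 1))).toReal := by
    rw [integral_finset_sum _ fun t ht => integrable_finset_sum _ fun u hu =>
      (integrable_ind P (hmCB t ht u hu)).const_mul _]
    refine Finset.sum_congr rfl fun t ht => ?_
    rw [integral_finset_sum _ fun u hu => (integrable_ind P (hmCB t ht u hu)).const_mul _]
    exact Finset.sum_congr rfl fun u hu => by
      rw [integral_const_mul, integral_ind P (hmCB t ht u hu)]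
  have hIT : ∫ ω, ind Ai ω * (LT.map (fun B => 1 - c * ind B ω)).prod ∂P
      = (P Ai).toReal - ∑ t ∈ Finset.range LT.length,
          c * (1 - c) ^ t * (P (Ai ∩ atLeast LT (t + 1))).toReal := by
    rw [integral_congr_ae (Filter.Eventually.of_forall hFT),
      integral_sub (integrable_ind P hAim) intST, integral_ind P hAim, iST]
  have hIU : ∫ ω, (LU.map (fun B => 1 - c * ind B ω)).prod ∂P
      = 1 - ∑ u ∈ Finset.range LU.length,
          c * (1 - c) ^ u * (P (atLeast LU (u + 1))).toReal := by
    rw [integral_congr_ae (Filter.Eventually.of_forall hFU),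
      integral_sub (integrable_const 1) intSU, iSU]
    simp
  have hILHS : ∫ ω, ind Ai ω * ((LT.map (fun B => 1 - c * ind B ω)).prod
        * (LU.map (fun B => 1 - c * ind B ω)).prod) ∂P
      = (P Ai).toReal
        - (∑ t ∈ Finset.range LT.length,
            c * (1 - c) ^ t * (P (Ai ∩ atLeast LT (t + 1))).toReal)
        - (∑ u ∈ Finset.range LU.length,
            c * (1 - c) ^ u * (P (Ai ∩ atLeast LU (u + 1))).toReal)
        + ∑ t ∈ Finset.range LT.length, ∑ u ∈ Finset.range LU.length,
            (c * (1 - c) ^ t) * (c * (1 - c) ^ u)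
              * (P (Ai ∩ atLeast LT (t + 1) ∩ atLeast LU (u + 1))).toReal := by
    have intP2 : Integrable (fun ω => ind Ai ω - ∑ t ∈ Finset.range LT.length,
        c * (1 - c) ^ t * ind (Ai ∩ atLeast LT (t + 1)) ω) P := by
      exact (integrable_ind P hAim).sub intST
    have intP1 : Integrable (fun ω => ind Ai ω
        - (∑ t ∈ Finset.range LT.length,
            c * (1 - c) ^ t * ind (Ai ∩ atLeast LT (t + 1)) ω)
        - ∑ u ∈ Finset.range LU.length,
            c * (1 - c) ^ u * ind (Ai ∩ atLeast LU (u + 1)) ω) P := by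
      exact intP2.sub intSAB
    rw [integral_congr_ae (Filter.Eventually.of_forall hLHSpt)]
    rw [integral_add intP1 intSS, integral_sub intP2 intSAB,
      integral_sub (integrable_ind P hAim) intST,
      integral_ind P hAim, iST, iSAB, iSS]
  rw [hIT, hIU, hILHS]
  -- final arithmetic
  have hq : ∀ u ∈ Finset.range LU.length,
      (P (Ai ∩ atLeast LU (u + 1))).toReal
        = (P Ai).toReal * (P (atLeast LU (u + 1))).toReal := by
    intro u hu
    rw [(hBU u (Finset.mem_range.1 hu)).2.2, ENNReal.toReal_mul]
  have hsub : (∑ u ∈ Finset.range LU.length,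
        c * (1 - c) ^ u * (P (Ai ∩ atLeast LU (u + 1))).toReal)
      = (P Ai).toReal * ∑ u ∈ Finset.range LU.length,
          c * (1 - c) ^ u * (P (atLeast LU (u + 1))).toReal := by
    rw [Finset.mul_sum]
    exact Finset.sum_congr rfl fun u hu => by rw [hq u hu]; ring
  have hcross : (∑ t ∈ Finset.range LT.length,
        c * (1 - c) ^ t * (P (Ai ∩ atLeast LT (t + 1))).toReal)
      * (∑ u ∈ Finset.range LU.length,
          c * (1 - c) ^ u * (P (atLeast LU (u + 1))).toReal)
      ≤ ∑ t ∈ Finset.range LT.length, ∑ u ∈ Finset.range LU.length,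
          (c * (1 - c) ^ t) * (c * (1 - c) ^ u)
            * (P (Ai ∩ atLeast LT (t + 1) ∩ atLeast LU (u + 1))).toReal := by
    rw [Finset.sum_mul_sum]
    refine Finset.sum_le_sum fun t ht => Finset.sum_le_sum fun u hu => ?_
    have hco : P (Ai ∩ atLeast LT (t + 1)) * P (atLeast LU (u + 1))
        ≤ P (Ai ∩ atLeast LT (t + 1) ∩ atLeast LU (u + 1)) :=
      hcorr _ (hinter _ hAiI _ (hCT t (Finset.mem_range.1 ht)).1) _
        (hBU u (Finset.mem_range.1 hu)).1
    have hco' : (P (Ai ∩ atLeast LT (t + 1))).toReal * (P (atLeast LU (u + 1))).toReal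
        ≤ (P (Ai ∩ atLeast LT (t + 1) ∩ atLeast LU (u + 1))).toReal := by
      rw [← ENNReal.toReal_mul]
      exact ENNReal.toReal_mono (measure_ne_top P _) hco
    calc c * (1 - c) ^ t * (P (Ai ∩ atLeast LT (t + 1))).toReal
          * (c * (1 - c) ^ u * (P (atLeast LU (u + 1))).toReal)
        = (c * (1 - c) ^ t) * (c * (1 - c) ^ u)
            * ((P (Ai ∩ atLeast LT (t + 1))).toReal * (P (atLeast LU (u + 1))).toReal) := by
          ring
      _ ≤ _ := mul_le_mul_of_nonneg_left hco' (mul_nonneg (hd t) (hd u))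
  set a := (P Ai).toReal
  set ST := ∑ t ∈ Finset.range LT.length,
      c * (1 - c) ^ t * (P (Ai ∩ atLeast LT (t + 1))).toReal
  set SU := ∑ u ∈ Finset.range LU.length,
      c * (1 - c) ^ u * (P (atLeast LU (u + 1))).toReal
  rw [hsub]
  nlinarith [hcross]

end JansonAux

open JansonAux

/-- The key correlation inequality in the proof of the lower-tail Janson inequality:
`E[1_{A_i} e^{−sX}] ≥ E[1_{A_i} e^{−sY_i}] · E[e^{−sX}]` for `s ≥ 0`. -/
theorem janson_key_correlation_general_upsets
    {Ω : Type*} [MeasurableSpace Ω] (P : Measure Ω) [IsProbabilityMeasure P]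
    (I : Set (Set Ω))
    (hcorr : ∀ A ∈ I, ∀ B ∈ I, P (A ∩ B) ≥ P A * P B)
    (hinter : ∀ A ∈ I, ∀ B ∈ I, A ∩ B ∈ I)
    (hunion : ∀ A ∈ I, ∀ B ∈ I, A ∪ B ∈ I)
    (k : ℕ) (A : Fin k → Set Ω) (hA : ∀ i, A i ∈ I)
    (hAmeas : ∀ i, MeasurableSet (A i))
    (sim : Fin k → Fin k → Prop)
    (hsim : ∀ i j, sim i j ↔ i ≠ j ∧ P (A i ∩ A j) ≠ P (A i) * P (A j))
    (i : Fin k)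
    (X Y Z : Ω → ℝ)
    (hY : ∀ ω, Y ω = (if ω ∈ A i then (1 : ℝ) else 0)
        + ∑ j ∈ Finset.univ.filter (fun j => sim i j), (if ω ∈ A j then (1 : ℝ) else 0))
    (hZ : ∀ ω, Z ω = ∑ j ∈ Finset.univ.filter (fun j => j ≠ i ∧ ¬ sim i j),
        (if ω ∈ A j then (1 : ℝ) else 0))
    (hXYZ : ∀ ω, X ω = Y ω + Z ω) :
    ∀ s : ℝ, 0 ≤ s →
      (∫ ω, (if ω ∈ A i then (1 : ℝ) else 0) * Real.exp (-s * X ω) ∂P)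
        ≥ (∫ ω, (if ω ∈ A i then (1 : ℝ) else 0) * Real.exp (-s * Y ω) ∂P)
          * (∫ ω, Real.exp (-s * X ω) ∂P) := by
  intro s hs
  classical
  set T : Finset (Fin k) := Finset.univ.filter (fun j => sim i j) with hT
  set U : Finset (Fin k) := Finset.univ.filter (fun j => j ≠ i ∧ ¬ sim i j) with hU
  set c : ℝ := 1 - Real.exp (-s) with hcdef
  have hexp1 : Real.exp (-s) ≤ 1 := Real.exp_le_one_iff.2 (by linarith)
  have hexp0 : 0 < Real.exp (-s) := Real.exp_pos _
  have hc0 : 0 ≤ c := by rw [hcdef]; linarith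
  have hc1 : c ≤ 1 := by rw [hcdef]; linarith
  have hY' : ∀ ω, Y ω = ind (A i) ω + ∑ j ∈ T, ind (A j) ω := hY
  have hZ' : ∀ ω, Z ω = ∑ j ∈ U, ind (A j) ω := hZ
  have hLT : ∀ B ∈ T.toList.map A, B ∈ I ∧ MeasurableSet B := by
    intro B hB; rcases List.mem_map.1 hB with ⟨j, _, rfl⟩; exact ⟨hA j, hAmeas j⟩
  have hLU : ∀ B ∈ U.toList.map A, B ∈ I ∧ MeasurableSet B
      ∧ P (A i ∩ B) = P (A i) * P B := by
    intro B hB; rcases List.mem_map.1 hB with ⟨j, hj, rfl⟩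
    have hjU : j ∈ U := Finset.mem_toList.1 hj
    obtain ⟨hji, hnsim⟩ := (Finset.mem_filter.1 hjU).2
    have hind : P (A i ∩ A j) = P (A i) * P (A j) := by
      by_contra hne
      exact hnsim ((hsim i j).2 ⟨Ne.symm hji, hne⟩)
    exact ⟨hA j, hAmeas j, hind⟩
  -- product / exponential relation
  have prodS_eq : ∀ (S : Finset (Fin k)) (ω : Ω),
      ((S.toList.map A).map (fun B => 1 - c * ind B ω)).prod
        = Real.exp (-s * ∑ j ∈ S, ind (A j) ω) := by
    intro S ω
    rw [List.map_map]
    rw [show -s * ∑ j ∈ S, ind (A j) ω = ∑ j ∈ S, (-s * ind (A j) ω) from Finset.mul_sum ..,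
      Real.exp_sum]
    rw [show ((fun B => 1 - c * ind B ω) ∘ A)
        = fun j => 1 - c * ind (A j) ω from rfl, Finset.prod_map_toList]
    refine Finset.prod_congr rfl fun j _ => ?_
    by_cases h : ω ∈ A j
    · rw [ind_of_mem h, mul_one, mul_one, hcdef]; ring
    · rw [ind_of_not_mem h, mul_zero, mul_zero, Real.exp_zero, sub_zero]
  have hSTnn : ∀ ω, (0:ℝ) ≤ ∑ j ∈ T, ind (A j) ω :=
    fun ω => Finset.sum_nonneg fun j _ => ind_nonneg _ _
  have hSUnn : ∀ ω, (0:ℝ) ≤ ∑ j ∈ U, ind (A j) ω :=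
    fun ω => Finset.sum_nonneg fun j _ => ind_nonneg _ _
  have hXnn : ∀ ω, 0 ≤ X ω := by
    intro ω
    rw [hXYZ ω, hY' ω, hZ' ω]
    have := ind_nonneg (A i) ω
    have := hSTnn ω; have := hSUnn ω
    linarith
  have hZX : ∀ ω, Z ω ≤ X ω := by
    intro ω
    rw [hXYZ ω, hY' ω]
    have := ind_nonneg (A i) ω
    have := hSTnn ω
    linarith
  -- pointwise identities for the integrands
  have hii : ∀ ω, ind (A i) ω * Real.exp (-s * Y ω)
      = Real.exp (-s) * (ind (A i) ω
          * ((T.toList.map A).map (fun B => 1 - c * ind B ω)).prod) := by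
    intro ω
    by_cases h : ω ∈ A i
    · rw [ind_of_mem h, one_mul, one_mul, hY' ω, ind_of_mem h, prodS_eq T ω,
        show -s * (1 + ∑ j ∈ T, ind (A j) ω) = -s + -s * ∑ j ∈ T, ind (A j) ω from by ring,
        Real.exp_add]
    · rw [ind_of_not_mem h]; ring
  have hiii : ∀ ω, ind (A i) ω * Real.exp (-s * X ω)
      = Real.exp (-s) * (ind (A i) ω
          * (((T.toList.map A).map (fun B => 1 - c * ind B ω)).prod
            * ((U.toList.map A).map (fun B => 1 - c * ind B ω)).prod)) := by
    intro ω
    by_cases h : ω ∈ A i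
    · rw [ind_of_mem h, one_mul, one_mul, hXYZ ω, hY' ω, hZ' ω, ind_of_mem h,
        prodS_eq T ω, prodS_eq U ω,
        show -s * (1 + ∑ j ∈ T, ind (A j) ω + ∑ j ∈ U, ind (A j) ω)
          = -s + (-s * ∑ j ∈ T, ind (A j) ω + -s * ∑ j ∈ U, ind (A j) ω) from by ring,
        Real.exp_add, Real.exp_add]
    · rw [ind_of_not_mem h]; ring
  have hiv : ∀ ω, Real.exp (-s * X ω)
      ≤ ((U.toList.map A).map (fun B => 1 - c * ind B ω)).prod := by
    intro ω
    rw [prodS_eq U ω, ← hZ' ω]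
    apply Real.exp_le_exp.2
    nlinarith [hZX ω]
  -- measurability and integrability
  have hXmeas : Measurable X := by
    have hXeq : X = fun ω => (ind (A i) ω + ∑ j ∈ T, ind (A j) ω) + ∑ j ∈ U, ind (A j) ω :=
      funext fun ω => by rw [hXYZ ω, hY' ω, hZ' ω]
    rw [hXeq]
    exact ((measurable_ind (hAmeas i)).add
        (Finset.measurable_sum _ fun j _ => measurable_ind (hAmeas j))).add
      (Finset.measurable_sum _ fun j _ => measurable_ind (hAmeas j))
  have intExpX : Integrable (fun ω => Real.exp (-s * X ω)) P := by
    have hm : Measurable fun ω => Real.exp (-s * X ω) :=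
      Real.measurable_exp.comp (hXmeas.const_mul (-s))
    refine Integrable.mono' (integrable_const (1:ℝ)) hm.aestronglyMeasurable
      (Filter.Eventually.of_forall fun ω => ?_)
    rw [Real.norm_eq_abs, abs_of_pos (Real.exp_pos _)]
    exact Real.exp_le_one_iff.2 (by nlinarith [hXnn ω])
  have hZmeas : Measurable Z := by
    have hZeq : Z = fun ω => ∑ j ∈ U, ind (A j) ω := funext fun ω => hZ' ω
    rw [hZeq]
    exact Finset.measurable_sum _ fun j _ => measurable_ind (hAmeas j)
  have intProdU : Integrable
      (fun ω => ((U.toList.map A).map (fun B => 1 - c * ind B ω)).prod) P := by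
    have heq : (fun ω => ((U.toList.map A).map (fun B => 1 - c * ind B ω)).prod)
        = fun ω => Real.exp (-s * Z ω) :=
      funext fun ω => by rw [prodS_eq U ω, ← hZ' ω]
    rw [heq]
    have hm : Measurable fun ω => Real.exp (-s * Z ω) :=
      Real.measurable_exp.comp (hZmeas.const_mul (-s))
    refine Integrable.mono' (integrable_const (1:ℝ)) hm.aestronglyMeasurable
      (Filter.Eventually.of_forall fun ω => ?_)
    rw [Real.norm_eq_abs, abs_of_pos (Real.exp_pos _)]
    have : 0 ≤ Z ω := by rw [hZ' ω]; exact hSUnn ω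
    exact Real.exp_le_one_iff.2 (by nlinarith)
  have hIXle : (∫ ω, Real.exp (-s * X ω) ∂P)
      ≤ ∫ ω, ((U.toList.map A).map (fun B => 1 - c * ind B ω)).prod ∂P :=
    integral_mono intExpX intProdU hiv
  have hITnn : 0 ≤ ∫ ω, ind (A i) ω
      * ((T.toList.map A).map (fun B => 1 - c * ind B ω)).prod ∂P :=
    integral_nonneg fun ω => mul_nonneg (ind_nonneg _ _) (listprod_nonneg hc0 hc1 _ _)
  have hmain := main_ineq P I hcorr hinter hunion (A i) (hA i) (hAmeas i)
    (T.toList.map A) (U.toList.map A) hLT hLU c hc0 hc1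
  show (∫ ω, ind (A i) ω * Real.exp (-s * X ω) ∂P)
      ≥ (∫ ω, ind (A i) ω * Real.exp (-s * Y ω) ∂P) * ∫ ω, Real.exp (-s * X ω) ∂P
  rw [show (∫ ω, ind (A i) ω * Real.exp (-s * X ω) ∂P)
      = Real.exp (-s) * ∫ ω, ind (A i) ω
          * (((T.toList.map A).map (fun B => 1 - c * ind B ω)).prod
            * ((U.toList.map A).map (fun B => 1 - c * ind B ω)).prod) ∂P from by
    rw [integral_congr_ae (Filter.Eventually.of_forall hiii)]; exact integral_const_mul _ _]
  rw [show (∫ ω, ind (A i) ω * Real.exp (-s * Y ω) ∂P)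
      = Real.exp (-s) * ∫ ω, ind (A i) ω
          * ((T.toList.map A).map (fun B => 1 - c * ind B ω)).prod ∂P from by
    rw [integral_congr_ae (Filter.Eventually.of_forall hii)]; exact integral_const_mul _ _]
  have hstep : (∫ ω, ind (A i) ω
        * ((T.toList.map A).map (fun B => 1 - c * ind B ω)).prod ∂P)
      * (∫ ω, Real.exp (-s * X ω) ∂P)
      ≤ ∫ ω, ind (A i) ω
          * (((T.toList.map A).map (fun B => 1 - c * ind B ω)).prod
            * ((U.toList.map A).map (fun B => 1 - c * ind B ω)).prod) ∂P :=
    le_trans (mul_le_mul_of_nonneg_left hIXle hITnn) hmain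
  calc Real.exp (-s) * (∫ ω, ind (A i) ω
        * ((T.toList.map A).map (fun B => 1 - c * ind B ω)).prod ∂P)
      * (∫ ω, Real.exp (-s * X ω) ∂P)
      = Real.exp (-s) * ((∫ ω, ind (A i) ω
          * ((T.toList.map A).map (fun B => 1 - c * ind B ω)).prod ∂P)
        * ∫ ω, Real.exp (-s * X ω) ∂P) := by ring
    _ ≤ _ := mul_le_mul_of_nonneg_left hstep hexp0.le
end

section
/- Let A_1, ..., A_k be increasing events in a finite product probability space {0,1}^S and s ≥ 0. For each i the random variables f = 1_{A_i}(1 − e^{−sY_i}) and g = e^{−sZ_i} satisfy E[fg] ≤ E[f]E[g], where Y_i = 1_{A_i} + Σ_{j~i} 1_{A_j} and Z_i = Σ_{j≠i, j≁i} 1_{A_j}. -/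
open MeasureTheory Finset Real
open scoped Classical

/-- For increasing events in a finite product space, the random variables
`f = 1_{A_i}(1 − e^{−sY_i})` and `g = e^{−sZ_i}` satisfy `E[fg] ≤ E[f]E[g]`. -/
theorem harris_for_janson_factors
    {S : Type*} [Fintype S] (μs : S → Measure Bool) [∀ s, IsProbabilityMeasure (μs s)]
    (k : ℕ) (A : Fin k → Set (S → Bool))
    (hAinc : ∀ i, ∀ ω ω' : S → Bool, (∀ s, ω s ≤ ω' s) → ω ∈ A i → ω' ∈ A i)
    (hAmeas : ∀ i, MeasurableSet (A i))
    (sim : Fin k → Fin k → Prop)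
    (hsim : ∀ i j, sim i j ↔ i ≠ j ∧
      Measure.pi μs (A i ∩ A j) ≠ Measure.pi μs (A i) * Measure.pi μs (A j))
    (i : Fin k) (s : ℝ) (hs : 0 ≤ s)
    (Y Z f g : (S → Bool) → ℝ)
    (hY : ∀ ω, Y ω = (if ω ∈ A i then (1 : ℝ) else 0)
        + ∑ j ∈ Finset.univ.filter (fun j => sim i j), (if ω ∈ A j then (1 : ℝ) else 0))
    (hZ : ∀ ω, Z ω = ∑ j ∈ Finset.univ.filter (fun j => j ≠ i ∧ ¬ sim i j),
        (if ω ∈ A j then (1 : ℝ) else 0))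
    (hf : ∀ ω, f ω = (if ω ∈ A i then (1 : ℝ) else 0) * (1 - Real.exp (-s * Y ω)))
    (hg : ∀ ω, g ω = Real.exp (-s * Z ω)) :
    (∫ ω, f ω * g ω ∂Measure.pi μs)
      ≤ (∫ ω, f ω ∂Measure.pi μs) * (∫ ω, g ω ∂Measure.pi μs) := by
  set μ : Measure (S → Bool) := Measure.pi μs with hμdef
  -- indicator functions and their basic properties
  set ind : Fin k → (S → Bool) → ℝ := fun j ω => if ω ∈ A j then (1 : ℝ) else 0 with hind
  have hind_mono : ∀ j, Monotone (ind j) := by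
    intro j ω ω' hle
    simp only [hind]
    by_cases h : ω ∈ A j
    · simp [h, hAinc j ω ω' (fun t => hle t) h]
    · by_cases h' : ω' ∈ A j <;> simp [h, h']
  have hind_nonneg : ∀ j ω, 0 ≤ ind j ω := by
    intro j ω; simp only [hind]; positivity
  -- Y and Z are monotone and nonnegative
  have hY_mono : Monotone Y := by
    intro ω ω' hle
    rw [hY, hY]
    exact add_le_add (hind_mono i hle) (Finset.sum_le_sum fun j _ => hind_mono j hle)
  have hY_nonneg : ∀ ω, 0 ≤ Y ω := by
    intro ω; rw [hY]
    have := hind_nonneg i ω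
    have : ∀ j ∈ Finset.univ.filter (fun j => sim i j), 0 ≤ ind j ω :=
      fun j _ => hind_nonneg j ω
    positivity
  have hZ_mono : Monotone Z := by
    intro ω ω' hle
    rw [hZ, hZ]
    exact Finset.sum_le_sum fun j _ => hind_mono j hle
  have hZ_nonneg : ∀ ω, 0 ≤ Z ω := by
    intro ω; rw [hZ]
    exact Finset.sum_nonneg fun j _ => hind_nonneg j ω
  -- f is monotone and in [0,1]
  have hf_mono : Monotone f := by
    have h1 : Monotone fun ω => 1 - Real.exp (-s * Y ω) := by
      intro ω ω' hle
      have h0 := hY_mono hle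
      have h2 : -s * Y ω' ≤ -s * Y ω := by nlinarith
      have := Real.exp_le_exp.2 h2
      simp only
      linarith
    have h2 : ∀ ω, (0:ℝ) ≤ 1 - Real.exp (-s * Y ω) := by
      intro ω
      have : Real.exp (-s * Y ω) ≤ 1 := by
        rw [Real.exp_le_one_iff]
        have := hY_nonneg ω
        nlinarith
      linarith
    intro ω ω' hle
    rw [hf, hf]
    exact mul_le_mul (hind_mono i hle) (h1 hle) (h2 ω) (hind_nonneg i ω')
  have hf_nonneg : ∀ ω, 0 ≤ f ω := by
    intro ω
    rw [hf]
    have : Real.exp (-s * Y ω) ≤ 1 := by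
      rw [Real.exp_le_one_iff]
      have := hY_nonneg ω
      nlinarith
    have := hind_nonneg i ω
    nlinarith
  -- g is in (0,1], and 1 - g is monotone and nonnegative
  have hg_nonneg : ∀ ω, 0 ≤ g ω := fun ω => by rw [hg]; positivity
  have hg_le_one : ∀ ω, g ω ≤ 1 := by
    intro ω
    rw [hg, Real.exp_le_one_iff]
    have := hZ_nonneg ω
    nlinarith
  have hg_anti : Antitone g := by
    intro ω ω' hle
    rw [hg, hg]
    have h0 := hZ_mono hle
    have h2 : -s * Z ω' ≤ -s * Z ω := by nlinarith
    exact Real.exp_le_exp.2 h2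
  set h : (S → Bool) → ℝ := fun ω => 1 - g ω with hhdef
  have hh_mono : Monotone h := fun ω ω' hle => by
    simp only [hhdef]; linarith [hg_anti hle]
  have hh_nonneg : ∀ ω, 0 ≤ h ω := fun ω => by
    simp only [hhdef]; linarith [hg_le_one ω]
  -- measure weights
  haveI : IsProbabilityMeasure μ := by rw [hμdef]; infer_instance
  haveI : MeasurableSingletonClass (S → Bool) := by infer_instance
  set w : (S → Bool) → ℝ := fun ω => (μ {ω}).toReal with hwdef
  have hw_nonneg : ∀ ω, 0 ≤ w ω := fun ω => ENNReal.toReal_nonneg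
  have hμsingle : ∀ ω : S → Bool, μ {ω} = ∏ t : S, μs t {ω t} := by
    intro ω
    rw [hμdef, ← Set.univ_pi_singleton ω, Measure.pi_pi]
  have hw_fkg : ∀ a b : S → Bool, w a * w b ≤ w (a ⊓ b) * w (a ⊔ b) := by
    intro a b
    have h1 : μ {a} * μ {b} = μ {a ⊓ b} * μ {a ⊔ b} := by
      rw [hμsingle, hμsingle, hμsingle, hμsingle, ← Finset.prod_mul_distrib,
        ← Finset.prod_mul_distrib]
      refine Finset.prod_congr rfl fun t _ => ?_
      have : (a ⊓ b) t = a t ⊓ b t := rfl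
      have : (a ⊔ b) t = a t ⊔ b t := rfl
      rcases le_total (a t) (b t) with hab | hab
      · have h1 : (a ⊓ b) t = a t := by
          show a t ⊓ b t = a t; exact inf_eq_left.2 hab
        have h2 : (a ⊔ b) t = b t := by
          show a t ⊔ b t = b t; exact sup_eq_right.2 hab
        rw [h1, h2]
      · have h1 : (a ⊓ b) t = b t := by
          show a t ⊓ b t = b t; exact inf_eq_right.2 hab
        have h2 : (a ⊔ b) t = a t := by
          show a t ⊔ b t = a t; exact sup_eq_left.2 hab
        rw [h1, h2, mul_comm]
    have : w a * w b = w (a ⊓ b) * w (a ⊔ b) := by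
      simp only [hwdef, ← ENNReal.toReal_mul, h1]
    exact this.le
  have hw_sum : ∑ ω : S → Bool, w ω = 1 := by
    have h0 : (∫ ω, (1 : ℝ) ∂μ) = 1 := by
      rw [integral_const, measureReal_def, measure_univ, ENNReal.toReal_one, smul_eq_mul, one_mul]
    have h1 : ∫ ω, (1 : ℝ) ∂μ = ∑ ω : S → Bool, (μ {ω}).toReal • (1:ℝ) :=
      integral_fintype (Integrable.of_finite)
    rw [h0] at h1
    calc ∑ ω : S → Bool, w ω = ∑ ω : S → Bool, (μ {ω}).toReal • (1:ℝ) := by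
          refine Finset.sum_congr rfl fun ω _ => ?_
          rw [smul_eq_mul, mul_one]
      _ = 1 := h1.symm
  -- integrals as sums
  have hint : ∀ F : (S → Bool) → ℝ, ∫ ω, F ω ∂μ = ∑ ω : S → Bool, w ω * F ω := by
    intro F
    rw [integral_fintype (Integrable.of_finite)]
    exact Finset.sum_congr rfl fun ω _ => smul_eq_mul _ _
  -- FKG inequality for f and h
  have hfkg := fkg f h w (fun ω => hw_nonneg ω) (fun ω => hf_nonneg ω) (fun ω => hh_nonneg ω)
    hf_mono hh_mono (fun a b => (hw_fkg a b))
  -- translate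
  rw [hint, hint, hint]
  have e1 : ∑ ω : S → Bool, w ω * (f ω * h ω)
      = ∑ ω : S → Bool, w ω * f ω - ∑ ω : S → Bool, w ω * (f ω * g ω) := by
    rw [← Finset.sum_sub_distrib]
    refine Finset.sum_congr rfl fun ω _ => ?_
    simp only [hhdef]; ring
  have e2 : ∑ ω : S → Bool, w ω * h ω
      = 1 - ∑ ω : S → Bool, w ω * g ω := by
    rw [← hw_sum, ← Finset.sum_sub_distrib]
    refine Finset.sum_congr rfl fun ω _ => ?_
    simp only [hhdef]; ring
  rw [hw_sum, one_mul, e1, e2] at hfkg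
  nlinarith [hfkg]
end

section
/- Let A_1, ..., A_k be events in a family I closed under intersections and unions in which any two events are positively correlated, with X = Σ_i 1_{A_i} and ε = max_i Pr(A_i) < 1. Then Pr(X = 0) ≤ [∏_{i=1}^k (1 − Pr(A_i))] · exp(Δ/(2(1−ε))), where Δ = Σ_i Σ_{j~i} Pr(A_i ∩ A_j). -/
open MeasureTheory Finset Real
open scoped Classical
set_option linter.unusedSectionVars false

section Helpers
variable {Ω : Type*} [MeasurableSpace Ω] {P : Measure Ω} [IsProbabilityMeasure P]

variable {Ω : Type*} [MeasurableSpace Ω] {P : Measure Ω} [IsProbabilityMeasure P]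

lemma pr_inter_add_diff (s : Set Ω) {t : Set Ω} (ht : MeasurableSet t) :
    (P (s ∩ t)).toReal + (P (s \ t)).toReal = (P s).toReal := by
  rw [← ENNReal.toReal_add (measure_ne_top P _) (measure_ne_top P _),
    measure_inter_add_diff s ht]

lemma pr_mono {s t : Set Ω} (h : s ⊆ t) : (P s).toReal ≤ (P t).toReal :=
  ENNReal.toReal_mono (measure_ne_top P t) (measure_mono h)

lemma pr_compl {s : Set Ω} (hs : MeasurableSet s) :
    (P sᶜ).toReal = 1 - (P s).toReal := by
  rw [measure_compl hs (measure_ne_top P s), measure_univ,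
    ENNReal.toReal_sub_of_le prob_le_one (by simp)]
  simp

lemma pr_biUnion_le {ι : Type*} (s : Finset ι) (f : ι → Set Ω) :
    (P (⋃ j ∈ s, f j)).toReal ≤ ∑ j ∈ s, (P (f j)).toReal := by
  rw [← ENNReal.toReal_sum (fun j _ => measure_ne_top P _)]
  exact ENNReal.toReal_mono (ENNReal.sum_ne_top.mpr (fun j _ => measure_ne_top P _))
    (measure_biUnion_finset_le s f)


end Helpers

section Core
variable {Ω : Type*} [MeasurableSpace Ω] {P : Measure Ω} [IsProbabilityMeasure P]
variable {I : Set (Set Ω)}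
variable (hcorr : ∀ A ∈ I, ∀ B ∈ I, P (A ∩ B) ≥ P A * P B)
variable (hinter : ∀ A ∈ I, ∀ B ∈ I, A ∩ B ∈ I)
variable (hunion : ∀ A ∈ I, ∀ B ∈ I, A ∪ B ∈ I)
variable {k : ℕ} {A : Fin k → Set Ω} (hA : ∀ i, A i ∈ I)
variable (hAmeas : ∀ i, MeasurableSet (A i))

include hcorr in
lemma janson_corr_real {B C : Set Ω} (hB : B ∈ I) (hC : C ∈ I) :
    (P B).toReal * (P C).toReal ≤ (P (B ∩ C)).toReal := by
  rw [← ENNReal.toReal_mul]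
  exact ENNReal.toReal_mono (measure_ne_top P _) (hcorr _ hB _ hC)

include hunion hA in
lemma janson_biUnion_mem (s : Finset (Fin k)) (hs : s.Nonempty) : (⋃ j ∈ s, A j) ∈ I := by
  classical
  induction s using Finset.induction_on with
  | empty => simp at hs
  | @insert a s ha ih =>
    rcases s.eq_empty_or_nonempty with rfl | hne
    · simpa using hA a
    · rw [Finset.set_biUnion_insert]
      exact hunion _ (hA a) _ (ih hne)

include hcorr hinter hunion hA hAmeas in
lemma janson_indep_union (i : Fin k) (s : Finset (Fin k))
    (hind : ∀ j ∈ s, P (A i ∩ A j) = P (A i) * P (A j)) :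
    P (A i ∩ ⋃ j ∈ s, A j) ≤ P (A i) * P (⋃ j ∈ s, A j) := by
  classical
  induction s using Finset.induction_on with
  | empty => simp
  | @insert a s ha ih =>
    have hia : P (A i ∩ A a) = P (A i) * P (A a) := hind a (mem_insert_self _ _)
    have ih' := ih (fun j hj => hind j (mem_insert_of_mem hj))
    rcases s.eq_empty_or_nonempty with rfl | hne
    · simpa using le_of_eq hia
    · set U := ⋃ j ∈ s, A j with hUdef
      have hUI : U ∈ I := janson_biUnion_mem hunion hA s hne
      rw [Finset.set_biUnion_insert]
      have hUm : MeasurableSet U := Finset.measurableSet_biUnion s (fun j _ => hAmeas j)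
      have key1 : P (A i ∩ (A a ∪ U)) + P (A i ∩ (A a ∩ U)) = P (A i ∩ A a) + P (A i ∩ U) := by
        have h1 : A i ∩ (A a ∪ U) = (A i ∩ A a) ∪ (A i ∩ U) := Set.inter_union_distrib_left ..
        have h2 : A i ∩ (A a ∩ U) = (A i ∩ A a) ∩ (A i ∩ U) := by
          ext ω; simp; tauto
        rw [h1, h2]
        exact measure_union_add_inter _ ((hAmeas i).inter hUm)
      have key2 : P (A a ∪ U) + P (A a ∩ U) = P (A a) + P U :=
        measure_union_add_inter _ hUm
      have hcorr' : P (A i) * P (A a ∩ U) ≤ P (A i ∩ (A a ∩ U)) :=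
        hcorr _ (hA i) _ (hinter _ (hA a) _ hUI)
      have main : P (A i ∩ (A a ∪ U)) + P (A i ∩ (A a ∩ U))
          ≤ P (A i) * P (A a ∪ U) + P (A i ∩ (A a ∩ U)) := by
        calc P (A i ∩ (A a ∪ U)) + P (A i ∩ (A a ∩ U))
            = P (A i ∩ A a) + P (A i ∩ U) := key1
          _ ≤ P (A i) * P (A a) + P (A i) * P U := by
              rw [hia]; exact add_le_add_right ih' _
          _ = P (A i) * (P (A a) + P U) := by ring
          _ = P (A i) * (P (A a ∪ U) + P (A a ∩ U)) := by rw [key2]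
          _ = P (A i) * P (A a ∪ U) + P (A i) * P (A a ∩ U) := by ring
          _ ≤ P (A i) * P (A a ∪ U) + P (A i ∩ (A a ∩ U)) := add_le_add_right hcorr' _
      exact (ENNReal.add_le_add_iff_right (measure_ne_top P _)).mp main
include hcorr hinter hunion hA hAmeas in
lemma janson_step (sim : Fin k → Fin k → Prop)
    (hsim : ∀ i j, sim i j ↔ i ≠ j ∧ P (A i ∩ A j) ≠ P (A i) * P (A j))
    (ε : ℝ) (hε1 : ε < 1) (hpε : ∀ i, (P (A i)).toReal ≤ ε)
    (i : Fin k) (s : Finset (Fin k)) (his : i ∉ s) :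
    (P ((A i)ᶜ ∩ ⋂ j ∈ s, (A j)ᶜ)).toReal
      ≤ ((1 - (P (A i)).toReal) *
          Real.exp ((∑ j ∈ s.filter (fun j => sim i j), (P (A i ∩ A j)).toReal) / (1 - ε)))
        * (P (⋂ j ∈ s, (A j)ᶜ)).toReal := by
  classical
  set p := (P (A i)).toReal with hpdef
  set δ := ∑ j ∈ s.filter (fun j => sim i j), (P (A i ∩ A j)).toReal with hδdef
  set C := ⋂ j ∈ s, (A j)ᶜ with hCdef
  set c := (P C).toReal with hcdef
  have hδ0 : 0 ≤ δ := Finset.sum_nonneg (fun j _ => ENNReal.toReal_nonneg)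
  have hc0 : 0 ≤ c := ENNReal.toReal_nonneg
  have h1ε : 0 < 1 - ε := by linarith
  have hpe : p ≤ ε := hpε i
  -- Key lower bound: P(A i ∩ C) ≥ (p - δ) c
  have key : (p - δ) * c ≤ (P (A i ∩ C)).toReal := by
    by_cases hpd : p - δ ≤ 0
    · exact le_trans (mul_nonpos_of_nonpos_of_nonneg hpd hc0) ENNReal.toReal_nonneg
    · push_neg at hpd
      set Nf := s.filter (fun j => ¬ sim i j) with hNfdef
      set D := s.filter (fun j => sim i j) with hDdef
      set U := ⋃ j ∈ Nf, A j with hUdef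
      set V := ⋃ j ∈ D, A j with hVdef
      have hUm : MeasurableSet U := Finset.measurableSet_biUnion _ (fun j _ => hAmeas j)
      have hVm : MeasurableSet V := Finset.measurableSet_biUnion _ (fun j _ => hAmeas j)
      have hCeq : A i ∩ C = (A i ∩ Uᶜ) \ V := by
        ext ω
        simp only [hCdef, hUdef, hVdef, hNfdef, hDdef, Set.mem_inter_iff, Set.mem_iInter,
          Set.mem_diff, Set.mem_compl_iff, Set.mem_iUnion, Finset.mem_filter, not_exists,
          exists_prop, not_and]
        constructor
        · rintro ⟨hi, hall⟩
          exact ⟨⟨hi, fun j hj => hall j hj.1⟩, fun j hj => hall j hj.1⟩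
        · rintro ⟨⟨hi, hN⟩, hD⟩
          refine ⟨hi, fun j hj => ?_⟩
          by_cases hsij : sim i j
          · exact hD j ⟨hj, hsij⟩
          · exact hN j ⟨hj, hsij⟩
      have hsplit : (P ((A i ∩ Uᶜ) ∩ V)).toReal + (P ((A i ∩ Uᶜ) \ V)).toReal
          = (P (A i ∩ Uᶜ)).toReal := pr_inter_add_diff _ hVm
      -- b1 : A i is negatively correlated with U
      have b1 : p * (P Uᶜ).toReal ≤ (P (A i ∩ Uᶜ)).toReal := by
        have hind : ∀ j ∈ Nf, P (A i ∩ A j) = P (A i) * P (A j) := by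
          intro j hj
          have hjs : j ∈ s := (Finset.mem_filter.mp hj).1
          have hns : ¬ sim i j := (Finset.mem_filter.mp hj).2
          have hij : i ≠ j := fun h => his (h ▸ hjs)
          by_contra hne; exact hns ((hsim i j).mpr ⟨hij, hne⟩)
        have h1 : (P (A i ∩ U)).toReal ≤ p * (P U).toReal := by
          rw [hpdef, ← ENNReal.toReal_mul]
          exact ENNReal.toReal_mono
            (ENNReal.mul_ne_top (measure_ne_top P _) (measure_ne_top P _))
            (janson_indep_union hcorr hinter hunion hA hAmeas i Nf hind)
        have h2 : (P (A i ∩ U)).toReal + (P (A i \ U)).toReal = p := pr_inter_add_diff _ hUm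
        have h3 : (P Uᶜ).toReal = 1 - (P U).toReal := pr_compl hUm
        have hAU : A i \ U = A i ∩ Uᶜ := Set.diff_eq _ _
        rw [← hAU, h3]
        nlinarith
      -- b2 : the dependent part is small
      have b2 : (P ((A i ∩ Uᶜ) ∩ V)).toReal ≤ δ * (P Uᶜ).toReal := by
        have hsub : (A i ∩ Uᶜ) ∩ V ⊆ ⋃ j ∈ D, ((A i ∩ A j) \ U) := by
          intro ω hω
          simp only [Set.mem_inter_iff, Set.mem_compl_iff, hVdef, Set.mem_iUnion,
            exists_prop, Set.mem_diff] at hω ⊢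
          obtain ⟨⟨hi, hU⟩, j, hjD, hj⟩ := hω
          exact ⟨j, hjD, ⟨hi, hj⟩, hU⟩
        have hb : (P ((A i ∩ Uᶜ) ∩ V)).toReal ≤ ∑ j ∈ D, (P ((A i ∩ A j) \ U)).toReal :=
          le_trans (pr_mono hsub) (pr_biUnion_le D _)
        have heach : ∀ j ∈ D, (P ((A i ∩ A j) \ U)).toReal
            ≤ (P (A i ∩ A j)).toReal * (P Uᶜ).toReal := by
          intro j hj
          have hspl := pr_inter_add_diff (P := P) (A i ∩ A j) hUm
          have hlow : (P (A i ∩ A j)).toReal * (P U).toReal ≤ (P ((A i ∩ A j) ∩ U)).toReal := by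
            rcases Nf.eq_empty_or_nonempty with hNe | hNe
            · have : U = ∅ := by simp [hUdef, hNe]
              simp [this]
            · exact janson_corr_real hcorr (hinter _ (hA i) _ (hA j))
                (janson_biUnion_mem hunion hA Nf hNe)
          rw [pr_compl hUm]
          nlinarith
        calc (P ((A i ∩ Uᶜ) ∩ V)).toReal ≤ ∑ j ∈ D, (P ((A i ∩ A j) \ U)).toReal := hb
          _ ≤ ∑ j ∈ D, (P (A i ∩ A j)).toReal * (P Uᶜ).toReal :=
              Finset.sum_le_sum heach
          _ = δ * (P Uᶜ).toReal := by rw [hδdef, hDdef, ← Finset.sum_mul]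
      have hCU : c ≤ (P Uᶜ).toReal := by
        refine pr_mono ?_
        intro ω hω
        simp only [hCdef, Set.mem_iInter, Set.mem_compl_iff] at hω
        simp only [hUdef, Set.mem_compl_iff, Set.mem_iUnion, exists_prop, not_exists, not_and]
        exact fun j hj => hω j (Finset.mem_filter.mp hj).1
      have hfin : (p - δ) * (P Uᶜ).toReal ≤ (P (A i ∩ C)).toReal := by
        rw [hCeq]
        nlinarith
      calc (p - δ) * c ≤ (p - δ) * (P Uᶜ).toReal :=
            mul_le_mul_of_nonneg_left hCU (le_of_lt hpd)
        _ ≤ (P (A i ∩ C)).toReal := hfin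
  -- Now the arithmetic wrap-up
  have hsplitC : (P (C ∩ A i)).toReal + (P (C \ A i)).toReal = c :=
    pr_inter_add_diff C (hAmeas i)
  have hEq : (A i)ᶜ ∩ C = C \ A i := by rw [Set.diff_eq, Set.inter_comm]
  have hkey' : (p - δ) * c ≤ (P (C ∩ A i)).toReal := by
    rw [Set.inter_comm]; exact key
  rw [hEq]
  have hexp : 1 + δ / (1 - ε) ≤ Real.exp (δ / (1 - ε)) := by
    linarith [Real.add_one_le_exp (δ / (1 - ε))]
  have hp1 : p ≤ 1 := le_trans hpe (le_of_lt hε1)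
  have hd : δ ≤ (1 - p) * (δ / (1 - ε)) := by
    rw [mul_div_assoc', le_div_iff₀ h1ε]
    nlinarith
  have hfac : 1 - p + δ ≤ (1 - p) * Real.exp (δ / (1 - ε)) := by
    nlinarith [mul_le_mul_of_nonneg_left hexp (by linarith : (0:ℝ) ≤ 1 - p)]
  nlinarith [mul_le_mul_of_nonneg_right hfac hc0]

include hcorr hinter hunion hA hAmeas in
lemma janson_main (sim : Fin k → Fin k → Prop)
    (hsim : ∀ i j, sim i j ↔ i ≠ j ∧ P (A i ∩ A j) ≠ P (A i) * P (A j))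
    (ε : ℝ) (hε1 : ε < 1) (hpε : ∀ i, (P (A i)).toReal ≤ ε) (n : ℕ) :
    (P (⋂ j ∈ univ.filter (fun j : Fin k => (j : ℕ) < n), (A j)ᶜ)).toReal
      ≤ ∏ j ∈ univ.filter (fun j : Fin k => (j : ℕ) < n),
          ((1 - (P (A j)).toReal) *
            Real.exp ((∑ m ∈ univ.filter (fun m : Fin k => (m : ℕ) < (j : ℕ) ∧ sim j m),
              (P (A j ∩ A m)).toReal) / (1 - ε))) := by
  classical
  induction n with
  | zero =>
    have h0 : univ.filter (fun j : Fin k => (j : ℕ) < 0) = ∅ := by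
      ext j; simp
    simp [h0]
  | succ n ih =>
    by_cases hn : n < k
    · set i : Fin k := ⟨n, hn⟩ with hidef
      set s := univ.filter (fun j : Fin k => (j : ℕ) < n) with hsdef
      have hins : univ.filter (fun j : Fin k => (j : ℕ) < n + 1) = insert i s := by
        ext j
        simp only [hsdef, Finset.mem_filter, Finset.mem_univ, true_and, Finset.mem_insert,
          hidef, Fin.ext_iff]
        omega
      have hnot : i ∉ s := by simp [hsdef, hidef]
      rw [hins, Finset.prod_insert hnot, Finset.set_biInter_insert]
      have hstep := janson_step hcorr hinter hunion hA hAmeas sim hsim ε hε1 hpε i s hnot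
      have hfilt : s.filter (fun j => sim i j)
          = univ.filter (fun m : Fin k => (m : ℕ) < (i : ℕ) ∧ sim i m) := by
        rw [hsdef, Finset.filter_filter]
      have hgpos : 0 ≤ (1 - (P (A i)).toReal) *
          Real.exp ((∑ m ∈ univ.filter (fun m : Fin k => (m : ℕ) < (i : ℕ) ∧ sim i m),
            (P (A i ∩ A m)).toReal) / (1 - ε)) :=
        mul_nonneg (by linarith [hpε i, hε1]) (le_of_lt (Real.exp_pos _))
      calc (P ((A i)ᶜ ∩ ⋂ j ∈ s, (A j)ᶜ)).toReal
          ≤ ((1 - (P (A i)).toReal) *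
              Real.exp ((∑ m ∈ univ.filter (fun m : Fin k => (m : ℕ) < (i : ℕ) ∧ sim i m),
                (P (A i ∩ A m)).toReal) / (1 - ε))) * (P (⋂ j ∈ s, (A j)ᶜ)).toReal := by
            rw [← hfilt]; exact hstep
        _ ≤ _ := mul_le_mul_of_nonneg_left ih hgpos
    · have hsame : univ.filter (fun j : Fin k => (j : ℕ) < n + 1)
          = univ.filter (fun j : Fin k => (j : ℕ) < n) := by
        ext j
        have := j.isLt
        simp only [Finset.mem_filter, Finset.mem_univ, true_and]
        omega
      rw [hsame]
      exact ih

end Core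


lemma janson_sym {k : ℕ} (f : Fin k → Fin k → ℝ) (r : Fin k → Fin k → Prop)
    (hf : ∀ i j, f i j = f j i) (hr : ∀ i j, r i j → r j i) (hirr : ∀ i, ¬ r i i) :
    2 * (∑ i : Fin k, ∑ j ∈ univ.filter (fun j : Fin k => (j : ℕ) < (i : ℕ) ∧ r i j), f i j)
      = ∑ i : Fin k, ∑ j ∈ univ.filter (fun j : Fin k => r i j), f i j := by
  classical
  have hsplit : ∀ i : Fin k, ∑ j ∈ univ.filter (fun j : Fin k => r i j), f i j
      = (∑ j ∈ univ.filter (fun j : Fin k => (j : ℕ) < (i : ℕ) ∧ r i j), f i j)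
      + (∑ j ∈ univ.filter (fun j : Fin k => (i : ℕ) < (j : ℕ) ∧ r i j), f i j) := by
    intro i
    rw [← Finset.sum_filter_add_sum_filter_not (univ.filter (fun j : Fin k => r i j))
      (fun j => (j : ℕ) < (i : ℕ))]
    congr 1
    · congr 1; ext j; simp only [Finset.mem_filter, Finset.mem_univ, true_and]; tauto
    · congr 1; ext j
      simp only [Finset.mem_filter, Finset.mem_univ, true_and]
      constructor
      · rintro ⟨hrij, hnot⟩
        have hne : (j : ℕ) ≠ (i : ℕ) := by
          intro h
          exact hirr i (by rwa [Fin.val_injective h] at hrij)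
        exact ⟨by omega, hrij⟩
      · rintro ⟨hlt, hrij⟩
        exact ⟨hrij, by omega⟩
  have hswap : (∑ i : Fin k, ∑ j ∈ univ.filter (fun j : Fin k => (i : ℕ) < (j : ℕ) ∧ r i j), f i j)
      = ∑ i : Fin k, ∑ j ∈ univ.filter (fun j : Fin k => (j : ℕ) < (i : ℕ) ∧ r i j), f i j := by
    simp only [Finset.sum_filter]
    rw [Finset.sum_comm]
    refine Finset.sum_congr rfl (fun a _ => Finset.sum_congr rfl (fun b _ => ?_))
    refine if_congr ⟨fun h => ⟨h.1, hr b a h.2⟩, fun h => ⟨h.1, hr a b h.2⟩⟩ (hf b a) rfl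
  rw [Finset.sum_congr rfl (fun i _ => hsplit i), Finset.sum_add_distrib, hswap]
  ring


/-- The Boppana–Spencer form of Janson's inequality:
`Pr(X = 0) ≤ ∏ (1 − Pr(A_i)) · exp(Δ/(2(1−ε)))` with `ε = max_i Pr(A_i) < 1`. -/
theorem janson_boppana_spencer_general_upsets
    {Ω : Type*} [MeasurableSpace Ω] (P : Measure Ω) [IsProbabilityMeasure P]
    (I : Set (Set Ω))
    (hcorr : ∀ A ∈ I, ∀ B ∈ I, P (A ∩ B) ≥ P A * P B)
    (hinter : ∀ A ∈ I, ∀ B ∈ I, A ∩ B ∈ I)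
    (hunion : ∀ A ∈ I, ∀ B ∈ I, A ∪ B ∈ I)
    (k : ℕ) (hk : 0 < k) (A : Fin k → Set Ω) (hA : ∀ i, A i ∈ I)
    (hAmeas : ∀ i, MeasurableSet (A i))
    (sim : Fin k → Fin k → Prop)
    (hsim : ∀ i j, sim i j ↔ i ≠ j ∧ P (A i ∩ A j) ≠ P (A i) * P (A j))
    (ε Δ : ℝ)
    (hε : ε = Finset.univ.sup' (Finset.univ_nonempty_iff.mpr ⟨⟨0, hk⟩⟩)
        (fun i => (P (A i)).toReal))
    (hε1 : ε < 1)
    (hΔ : Δ = ∑ i : Fin k, ∑ j ∈ Finset.univ.filter (fun j => sim i j),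
        (P (A i ∩ A j)).toReal) :
    (P (⋂ i, (A i)ᶜ)).toReal
      ≤ (∏ i : Fin k, (1 - (P (A i)).toReal)) * Real.exp (Δ / (2 * (1 - ε))) := by
  classical
  have hpε : ∀ i, (P (A i)).toReal ≤ ε := by
    intro i; rw [hε]; exact Finset.le_sup' (fun i => (P (A i)).toReal) (Finset.mem_univ i)
  have hmain := janson_main hcorr hinter hunion hA hAmeas sim hsim ε hε1 hpε k
  have hful : univ.filter (fun j : Fin k => (j : ℕ) < k) = univ := by
    ext j; simp [j.isLt]
  rw [hful] at hmain
  have hset : (⋂ j ∈ (univ : Finset (Fin k)), (A j)ᶜ) = ⋂ i, (A i)ᶜ := by simp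
  rw [hset] at hmain
  set T := ∑ j : Fin k, ∑ m ∈ univ.filter (fun m : Fin k => (m : ℕ) < (j : ℕ) ∧ sim j m),
    (P (A j ∩ A m)).toReal with hTdef
  have hprod : (∏ j : Fin k, ((1 - (P (A j)).toReal) *
        Real.exp ((∑ m ∈ univ.filter (fun m : Fin k => (m : ℕ) < (j : ℕ) ∧ sim j m),
          (P (A j ∩ A m)).toReal) / (1 - ε))))
      = (∏ j : Fin k, (1 - (P (A j)).toReal)) * Real.exp (T / (1 - ε)) := by
    rw [Finset.prod_mul_distrib, ← Real.exp_sum, ← Finset.sum_div, hTdef]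
  have hΔT : Δ = 2 * T := by
    rw [hΔ, hTdef, ← janson_sym (fun i j => (P (A i ∩ A j)).toReal) sim
      (fun i j => by rw [Set.inter_comm])
      (fun i j h => by
        rw [hsim] at h ⊢
        exact ⟨h.1.symm, by rw [Set.inter_comm, mul_comm]; exact h.2⟩)
      (fun i h => ((hsim i i).mp h).1 rfl)]
  have harg : Δ / (2 * (1 - ε)) = T / (1 - ε) := by
    rw [hΔT, mul_div_mul_left _ _ (two_ne_zero)]
  rw [harg, ← hprod]
  exact hmain
end
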